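/- arXiv:2305.05448 — 6 statements merged into one kernel-verified Lean document; each statement's English description precedes it below -/
import Mathlib

section
/- If (r,u) follows the weight-normalized gradient flow, then the Euclidean norm of u is conserved: ‖u(t)‖₂ = ‖u(0)‖₂ for all t ≥ 0. -/
open Filter Topology

noncomputable section

variable {M N : ℕ}

/-- Entrywise (Hadamard) natural power `x^{⊙L}`. -/
def hadPow (x : Fin N → ℝ) (L : ℕ) : Fin N → ℝ := fun n => x n ^ L

/-- Euclidean (ℓ2) norm of a vector. -/
def eucNorm (u : Fin N → ℝ) : ℝ := Real.sqrt (∑ n, u n ^ 2)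

/-- The loss `𝓛(x) = (1/(2L)) ‖A x^{⊙L} − b‖₂²`. -/
def loss (A : Matrix (Fin M) (Fin N) ℝ) (b : Fin M → ℝ) (L : ℕ) (x : Fin N → ℝ) : ℝ :=
  (1 / (2 * (L : ℝ))) * ∑ m, (A.mulVec (hadPow x L) m - b m) ^ 2

/-- The gradient `∇𝓛(x) = [Aᵀ(A x^{⊙L} − b)] ⊙ x^{⊙(L−1)}`. -/
def gradLoss (A : Matrix (Fin M) (Fin N) ℝ) (b : Fin M → ℝ) (L : ℕ) (x : Fin N → ℝ) :
    Fin N → ℝ :=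
  fun n => A.transpose.mulVec (A.mulVec (hadPow x L) - b) n * x n ^ (L - 1)

/-- The weight-normalized vector `x = (r/‖u‖₂) u`. -/
def normVec (r : ℝ) (u : Fin N → ℝ) : Fin N → ℝ := (r / eucNorm u) • u

/-- `∇_r 𝓛̃(r,u) = (uᵀ/‖u‖₂) ∇𝓛((r/‖u‖₂)u)`. -/
def gradR (A : Matrix (Fin M) (Fin N) ℝ) (b : Fin M → ℝ) (L : ℕ) (r : ℝ)
    (u : Fin N → ℝ) : ℝ :=
  ∑ n, (u n / eucNorm u) * gradLoss A b L (normVec r u) n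

/-- `∇_u 𝓛̃(r,u) = (r/‖u‖₂)(I − uuᵀ/‖u‖₂²) ∇𝓛((r/‖u‖₂)u)`. -/
def gradU (A : Matrix (Fin M) (Fin N) ℝ) (b : Fin M → ℝ) (L : ℕ) (r : ℝ)
    (u : Fin N → ℝ) : Fin N → ℝ :=
  fun n => (r / eucNorm u) * (gradLoss A b L (normVec r u) n -
    (∑ k, u k * gradLoss A b L (normVec r u) k) / eucNorm u ^ 2 * u n)

/-- Weight-normalized gradient flow with (possibly time-dependent) learning rates
`(η_r, η_u)`: `∂ₜ r = −η_r ∇_r 𝓛̃(r,u)`, `∂ₜ u = −η_u ∇_u 𝓛̃(r,u)` for `t ≥ 0`. -/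
def WNFlow (A : Matrix (Fin M) (Fin N) ℝ) (b : Fin M → ℝ) (L : ℕ)
    (ηr ηu : ℝ → ℝ) (r : ℝ → ℝ) (u : ℝ → Fin N → ℝ) : Prop :=
  (∀ t, 0 ≤ t → HasDerivAt r (-(ηr t * gradR A b L (r t) (u t))) t) ∧
  (∀ t, 0 ≤ t → ∀ n, HasDerivAt (fun s => u s n) (-(ηu t * gradU A b L (r t) (u t) n)) t)

/-- Plain gradient flow `∂ₜ x = −∇𝓛(x)` for `t ≥ 0`. -/
def GradFlow (A : Matrix (Fin M) (Fin N) ℝ) (b : Fin M → ℝ) (L : ℕ)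
    (x : ℝ → Fin N → ℝ) : Prop :=
  ∀ t, 0 ≤ t → ∀ n, HasDerivAt (fun s => x s n) (-gradLoss A b L (x t) n) t

/-- The set of nonnegative solutions `S₊ = {z ≥ 0 : Az = b}`. -/
def Splus (A : Matrix (Fin M) (Fin N) ℝ) (b : Fin M → ℝ) : Set (Fin N → ℝ) :=
  {z | (∀ n, 0 ≤ z n) ∧ A.mulVec z = b}

/-- Weighted ℓ1-norm `‖z‖_{w,1} = ‖w ⊙ z‖₁`. -/
def wl1 (w z : Fin N → ℝ) : ℝ := ∑ n, |w n * z n|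

/-- The Moore–Penrose conditions characterizing the pseudoinverse `A†`. -/
def IsMoorePenrose (A : Matrix (Fin M) (Fin N) ℝ) (Adag : Matrix (Fin N) (Fin M) ℝ) :
    Prop :=
  A * Adag * A = A ∧ Adag * A * Adag = Adag ∧
    (A * Adag).transpose = A * Adag ∧ (Adag * A).transpose = Adag * A

/-- The potential `F` defining the Bregman divergence. -/
def breF (L : ℕ) (p : Fin N → ℝ) : ℝ :=
  if L = 2 then (1 / 2) * ∑ n, (p n * Real.log (p n) - p n)
  else ((L : ℝ) / (2 * (2 - (L : ℝ)))) * ∑ n, p n ^ ((2 : ℝ) / (L : ℝ))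

/-- The gradient of the potential `F`. -/
def breGradF (L : ℕ) (q : Fin N → ℝ) : Fin N → ℝ :=
  fun n => if L = 2 then (1 / 2) * Real.log (q n)
  else (1 / (2 - (L : ℝ))) * q n ^ ((2 : ℝ) / (L : ℝ) - 1)

/-- Bregman divergence `D_F(p,q) = F(p) − F(q) − ⟨∇F(q), p − q⟩`. -/
def bregman (L : ℕ) (p q : Fin N → ℝ) : ℝ :=
  breF L p - breF L q - ∑ n, breGradF L q n * (p n - q n)


lemma sum_mul_gradU {M N : ℕ} (L : ℕ) (A : Matrix (Fin M) (Fin N) ℝ) (b : Fin M → ℝ)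
    (r : ℝ) (u : Fin N → ℝ) :
    ∑ n, u n * gradU A b L r u n = 0 := by
  set c := eucNorm u with hc
  set g := gradLoss A b L (normVec r u) with hg
  set S := ∑ k, u k * g k with hS
  have hQ : (0:ℝ) ≤ ∑ n, u n ^ 2 := Finset.sum_nonneg fun n _ => sq_nonneg _
  have hcsq : c ^ 2 = ∑ n, u n ^ 2 := Real.sq_sqrt hQ
  simp only [gradU, ← hg, ← hc, ← hS]
  have key : (∑ n, u n * ((r / c) * (g n - S / c ^ 2 * u n)))
      = (r / c) * S - (r / c) * (S / c ^ 2) * (∑ n, u n ^ 2) := by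
    have h : ∀ n : Fin N, u n * ((r / c) * (g n - S / c ^ 2 * u n))
        = (r / c) * (u n * g n) - (r / c) * (S / c ^ 2) * (u n ^ 2) := fun n => by ring
    simp only [h, Finset.sum_sub_distrib, ← Finset.mul_sum, ← hS]
  rw [key]
  rcases eq_or_ne c 0 with h0 | h0
  · simp [h0]
  · rw [← hcsq]
    field_simp
    ring

theorem stmt6 {M N : ℕ} (L : ℕ)
    (A : Matrix (Fin M) (Fin N) ℝ) (b : Fin M → ℝ)
    (ηr ηu : ℝ → ℝ) (hηr : ∀ t, 0 < ηr t) (hηu : ∀ t, 0 < ηu t)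
    (r : ℝ → ℝ) (u : ℝ → Fin N → ℝ)
    (hflow : WNFlow A b L ηr ηu r u) :
    ∀ t, 0 ≤ t → eucNorm (u t) = eucNorm (u 0) := by
  set q : ℝ → ℝ := fun s => ∑ n, u s n ^ 2 with hq
  have hderiv : ∀ t, 0 ≤ t → HasDerivAt q 0 t := by
    intro t ht
    have h1 : HasDerivAt q (∑ n, 2 * u t n * (-(ηu t * gradU A b L (r t) (u t) n))) t := by
      apply HasDerivAt.fun_sum
      intro n _
      have := (hflow.2 t ht n).fun_pow 2
      simpa [mul_comm, mul_assoc, mul_left_comm] using this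
    have h0 : (∑ n, 2 * u t n * (-(ηu t * gradU A b L (r t) (u t) n))) = 0 := by
      have key := sum_mul_gradU L A b (r t) (u t)
      calc (∑ n, 2 * u t n * (-(ηu t * gradU A b L (r t) (u t) n)))
          = (-(2 * ηu t)) * ∑ n, u t n * gradU A b L (r t) (u t) n := by
            rw [Finset.mul_sum]; congr 1 with n; ring
        _ = 0 := by rw [key, mul_zero]
    rwa [h0] at h1
  intro t ht
  have hconst : q t = q 0 := by
    have hcont : ContinuousOn q (Set.Icc 0 t) := by
      intro s hs
      exact ((hderiv s hs.1).continuousAt).continuousWithinAt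
    have := constant_of_has_deriv_right_zero hcont
      (fun s hs => ((hderiv s hs.1).hasDerivWithinAt)) t (Set.right_mem_Icc.2 ht)
    exact this
  simp only [eucNorm]
  rw [show (∑ n, u t n ^ 2) = q t from rfl, hconst]

end
end

section
/- Suppose (r,u) follows the weight-normalized gradient flow with ‖u(0)‖₂ = 1, and set x(t) = (r(t)/‖u(t)‖₂) u(t). Let t₀ ≥ 0 and T ≥ t₀. Suppose there are constants c_r, c_u, c_x > 0 and an index set I ⊆ {1,…,N} such that η_r(t) ≥ c_r, η_u(t) ≥ c_u, and |x_n(t)| ≥ c_x for all n ∈ I and all t ∈ [t₀, T]. If the submatrix A|_I of A (columns indexed by I) has full rank with smallest singular value σ_min(A|_I), then for all t ∈ [t₀, T], 𝓛(x(t)) ≤ 𝓛(x(t₀)) · exp(−min(c_r, c_u c_x² |I|) · 2L c_x^{2L−2} σ_min²(A|_I) · (t − t₀)). -/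
open Filter Topology

noncomputable section

variable {M N : ℕ}

lemma norm_preserved' {M N : ℕ} (A : Matrix (Fin M) (Fin N) ℝ) (b : Fin M → ℝ) (L : ℕ)
    (ηr ηu : ℝ → ℝ) (r : ℝ → ℝ) (u : ℝ → Fin N → ℝ)
    (hflow : WNFlow A b L ηr ηu r u) (hnorm : eucNorm (u 0) = 1) :
    ∀ t, 0 ≤ t → eucNorm (u t) = 1 := by
  have hsum0 : ∑ n, u 0 n ^ 2 = 1 := by
    have h := hnorm
    unfold eucNorm at h
    have hS0 : (0:ℝ) ≤ ∑ n, u 0 n ^ 2 := Finset.sum_nonneg fun n _ => sq_nonneg _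
    have h2 := Real.sq_sqrt hS0
    rw [h] at h2
    simpa using h2.symm
  have hderiv : ∀ t, 0 ≤ t → HasDerivAt (fun s => ∑ n, u s n ^ 2) 0 t := by
    intro t ht
    have h1 : HasDerivAt (fun s => ∑ n, u s n ^ 2)
        (∑ n, 2 * u t n * (-(ηu t * gradU A b L (r t) (u t) n))) t := by
      have := HasDerivAt.fun_sum (u := Finset.univ)
        (A := fun (n : Fin N) s => u s n ^ 2)
        (A' := fun n => 2 * u t n * (-(ηu t * gradU A b L (r t) (u t) n)))
        (fun n _ => by
          have h := (hflow.2 t ht n).fun_pow 2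
          simpa [mul_comm, mul_assoc, mul_left_comm] using h)
      exact this
    convert h1 using 1
    by_cases he : eucNorm (u t) = 0
    · have hz : ∀ n, u t n = 0 := by
        intro n
        have h0 : ∑ k, u t k ^ 2 = 0 := by
          have hle := Real.sqrt_eq_zero'.mp he
          exact le_antisymm hle (Finset.sum_nonneg fun k _ => sq_nonneg (u t k))
        have := (Finset.sum_eq_zero_iff_of_nonneg (fun k _ => sq_nonneg (u t k))).mp h0 n
          (Finset.mem_univ n)
        exact pow_eq_zero_iff (by norm_num) |>.mp this
      symm
      apply Finset.sum_eq_zero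
      intro n _
      simp [hz n]
    · have hQ : eucNorm (u t) ^ 2 = ∑ n, u t n ^ 2 :=
        Real.sq_sqrt (Finset.sum_nonneg fun n _ => sq_nonneg (u t n))
      set e := eucNorm (u t) with hedef
      set S := ∑ k, u t k * gradLoss A b L (normVec (r t) (u t)) k with hS
      have step : ∀ n, 2 * u t n * (-(ηu t * gradU A b L (r t) (u t) n)) =
          (-(2 * ηu t * (r t / e))) * (u t n * gradLoss A b L (normVec (r t) (u t)) n
            - S / e^2 * u t n ^ 2) := by
        intro n
        unfold gradU
        rw [← hedef, ← hS]
        ring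
      rw [Finset.sum_congr rfl (fun n _ => step n), ← Finset.mul_sum]
      rw [Finset.sum_sub_distrib, ← Finset.mul_sum, ← hQ]
      rw [← hS]
      have : S - S / e ^ 2 * e ^ 2 = 0 := by field_simp; ring
      rw [this, mul_zero]
  intro t ht
  have hconst : ∑ n, u t n ^ 2 = ∑ n, u 0 n ^ 2 := by
    have hcont : ContinuousOn (fun s => ∑ n, u s n ^ 2) (Set.Icc 0 t) := by
      intro s hs
      exact ((hderiv s hs.1).continuousAt).continuousWithinAt
    have := constant_of_has_deriv_right_zero hcont
      (fun s hs => ((hderiv s hs.1).hasDerivWithinAt))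
    exact this t (Set.mem_Icc.mpr ⟨ht, le_refl t⟩)
  unfold eucNorm
  rw [hconst, hsum0, Real.sqrt_one]

lemma loss_hasDerivAt' {M N : ℕ} (A : Matrix (Fin M) (Fin N) ℝ) (b : Fin M → ℝ) (L : ℕ)
    (hL : L ≠ 0) (y : ℝ → Fin N → ℝ) (y' : Fin N → ℝ) (t : ℝ)
    (hy : ∀ n, HasDerivAt (fun s => y s n) (y' n) t) :
    HasDerivAt (fun s => loss A b L (y s)) (∑ n, gradLoss A b L (y t) n * y' n) t := by
  have hLne : (L : ℝ) ≠ 0 := Nat.cast_ne_zero.mpr hL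
  have hinner : ∀ m : Fin M, HasDerivAt (fun s => (∑ n, A m n * y s n ^ L) - b m)
      (∑ n, A m n * ((L : ℝ) * y t n ^ (L - 1) * y' n)) t := by
    intro m
    apply HasDerivAt.sub_const
    exact HasDerivAt.fun_sum (fun n _ => ((hy n).fun_pow L).const_mul (A m n))
  have hmain : HasDerivAt (fun s => loss A b L (y s))
      ((1 / (2 * (L : ℝ))) * ∑ m, (2 * ((∑ n, A m n * y t n ^ L) - b m) ^ 1 *
        (∑ n, A m n * ((L : ℝ) * y t n ^ (L - 1) * y' n)))) t := by
    have h : HasDerivAt (fun s => ∑ m, ((∑ n, A m n * y s n ^ L) - b m) ^ 2)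
        (∑ m, (2 * ((∑ n, A m n * y t n ^ L) - b m) ^ 1 *
          (∑ n, A m n * ((L : ℝ) * y t n ^ (L - 1) * y' n)))) t := by
      apply HasDerivAt.fun_sum
      intro m _
      have := (hinner m).fun_pow 2
      simpa using this
    exact h.const_mul (1 / (2 * (L : ℝ)))
  convert hmain using 1
  calc ∑ n, gradLoss A b L (y t) n * y' n
      = ∑ n, ∑ m, A m n * ((∑ k, A m k * y t k ^ L) - b m) * (y t n ^ (L - 1) * y' n) := by
        apply Finset.sum_congr rfl
        intro n _
        show (A.transpose.mulVec (A.mulVec (hadPow (y t) L) - b) n * y t n ^ (L - 1)) * y' n = _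
        have : A.transpose.mulVec (A.mulVec (hadPow (y t) L) - b) n
            = ∑ m, A m n * ((∑ k, A m k * y t k ^ L) - b m) := by
          unfold Matrix.mulVec dotProduct hadPow
          simp [Matrix.transpose_apply]
        rw [this, Finset.sum_mul, Finset.sum_mul]
        apply Finset.sum_congr rfl
        intro m _
        ring
    _ = ∑ m, ∑ n, A m n * ((∑ k, A m k * y t k ^ L) - b m) * (y t n ^ (L - 1) * y' n) :=
        Finset.sum_comm
    _ = (1 / (2 * (L : ℝ))) * ∑ m, (2 * ((∑ n, A m n * y t n ^ L) - b m) ^ 1 *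
        (∑ n, A m n * ((L : ℝ) * y t n ^ (L - 1) * y' n))) := by
        rw [Finset.mul_sum]
        apply Finset.sum_congr rfl
        intro m _
        rw [pow_one, Finset.mul_sum, Finset.mul_sum]
        apply Finset.sum_congr rfl
        intro n _
        field_simp

lemma gronwall_decay' (G G' : ℝ → ℝ) (K t₀ T : ℝ)
    (hG : ∀ t ∈ Set.Icc t₀ T, HasDerivAt G (G' t) t)
    (hbound : ∀ t ∈ Set.Icc t₀ T, G' t ≤ -K * G t) :
    ∀ t ∈ Set.Icc t₀ T, G t ≤ G t₀ * Real.exp (-(K * (t - t₀))) := by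
  set φ : ℝ → ℝ := fun s => G s * Real.exp (K * (s - t₀)) with hφ
  have hexp : ∀ s : ℝ, HasDerivAt (fun w => Real.exp (K * (w - t₀)))
      (Real.exp (K * (s - t₀)) * K) s := by
    intro s
    have h1 : HasDerivAt (fun w : ℝ => K * (w - t₀)) K s := by
      simpa using (((hasDerivAt_id s).sub_const t₀).const_mul K)
    simpa using h1.exp
  have hφd : ∀ t ∈ Set.Icc t₀ T, HasDerivAt φ
      (G' t * Real.exp (K * (t - t₀)) + G t * (Real.exp (K * (t - t₀)) * K)) t := by
    intro t ht
    exact (hG t ht).mul (hexp t)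
  have hanti : AntitoneOn φ (Set.Icc t₀ T) := by
    apply antitoneOn_of_deriv_nonpos (convex_Icc t₀ T)
    · intro s hs
      exact ((hφd s hs).continuousAt).continuousWithinAt
    · intro s hs
      rw [interior_Icc] at hs
      exact (hφd s ⟨hs.1.le, hs.2.le⟩).differentiableAt.differentiableWithinAt
    · intro s hs
      rw [interior_Icc] at hs
      have hs' : s ∈ Set.Icc t₀ T := ⟨hs.1.le, hs.2.le⟩
      rw [(hφd s hs').deriv]
      have hb := hbound s hs'
      have hE : 0 < Real.exp (K * (s - t₀)) := Real.exp_pos _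
      nlinarith
  intro t ht
  have h0 : t₀ ∈ Set.Icc t₀ T := ⟨le_refl _, ht.1.trans ht.2⟩
  have := hanti h0 ht ht.1
  have hφt₀ : φ t₀ = G t₀ := by simp [hφ]
  have hE : 0 < Real.exp (K * (t - t₀)) := Real.exp_pos _
  rw [hφt₀] at this
  rw [Real.exp_neg]
  rw [← sub_nonneg] at this ⊢
  have : 0 ≤ G t₀ - G t * Real.exp (K * (t - t₀)) := by
    have h := this
    simp only [hφ] at h
    linarith
  have h2 : G t₀ * (Real.exp (K * (t - t₀)))⁻¹ - G t
      = (G t₀ - G t * Real.exp (K * (t - t₀))) * (Real.exp (K * (t - t₀)))⁻¹ := by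
    field_simp
  rw [h2]
  positivity


set_option maxHeartbeats 1000000 in
theorem stmt9 {M N : ℕ} (L : ℕ)
    (A : Matrix (Fin M) (Fin N) ℝ) (b : Fin M → ℝ)
    (ηr ηu : ℝ → ℝ)
    (r : ℝ → ℝ) (u : ℝ → Fin N → ℝ)
    (hflow : WNFlow A b L ηr ηu r u)
    (hnorm : eucNorm (u 0) = 1)
    (x : ℝ → Fin N → ℝ) (hx : ∀ t, x t = normVec (r t) (u t))
    (t₀ T : ℝ) (ht₀ : 0 ≤ t₀) (hT : t₀ ≤ T)
    (cr cu cx : ℝ) (hcr : 0 < cr) (hcu : 0 < cu) (hcx : 0 < cx)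
    (I : Finset (Fin N))
    (hηr : ∀ t ∈ Set.Icc t₀ T, cr ≤ ηr t)
    (hηu : ∀ t ∈ Set.Icc t₀ T, cu ≤ ηu t)
    (hxI : ∀ t ∈ Set.Icc t₀ T, ∀ n ∈ I, cx ≤ |x t n|)
    (σ : ℝ) (hσ : 0 < σ)
    (hfull : ∀ y : Fin M → ℝ,
      σ ^ 2 * ∑ m, y m ^ 2 ≤ ∑ n ∈ I, A.transpose.mulVec y n ^ 2) :
    ∀ t ∈ Set.Icc t₀ T,
      loss A b L (x t) ≤ loss A b L (x t₀) *
        Real.exp (-(min cr (cu * cx ^ 2 * (I.card : ℝ)) *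
          (2 * (L : ℝ)) * cx ^ (2 * L - 2) * σ ^ 2 * (t - t₀))) := by
  rcases Nat.eq_zero_or_pos L with hL0 | hLpos
  · subst hL0
    intro t ht
    simp [loss]
  have hL : L ≠ 0 := hLpos.ne'
  have hLne : (L : ℝ) ≠ 0 := Nat.cast_ne_zero.mpr hL
  obtain ⟨hdr, hdu⟩ := hflow
  have hue : ∀ s, 0 ≤ s → eucNorm (u s) = 1 :=
    norm_preserved' A b L ηr ηu r u ⟨hdr, hdu⟩ hnorm
  have husq : ∀ s, 0 ≤ s → ∑ n, u s n ^ 2 = 1 := by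
    intro s hs
    have h := hue s hs
    unfold eucNorm at h
    have h0 : (0:ℝ) ≤ ∑ n, u s n ^ 2 := Finset.sum_nonneg fun n _ => sq_nonneg _
    have h2 := Real.sq_sqrt h0
    rw [h] at h2
    simpa using h2.symm
  have hnv : ∀ s, 0 ≤ s → normVec (r s) (u s) = fun n => r s * u s n := by
    intro s hs
    funext n
    unfold normVec
    rw [hue s hs]
    simp
  have hxeq : ∀ s, 0 ≤ s → x s = fun n => r s * u s n := by
    intro s hs
    rw [hx s, hnv s hs]
  set K := min cr (cu * cx ^ 2 * (I.card : ℝ)) * (2 * (L : ℝ)) * cx ^ (2 * L - 2) * σ ^ 2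
    with hKdef
  set G : ℝ → ℝ := fun s => loss A b L (fun n => r s * u s n) with hGdef
  set G' : ℝ → ℝ := fun s => ∑ n, gradLoss A b L (fun k => r s * u s k) n *
      (-(ηr s * gradR A b L (r s) (u s)) * u s n +
        r s * -(ηu s * gradU A b L (r s) (u s) n)) with hG'def
  have hGd : ∀ s ∈ Set.Icc t₀ T, HasDerivAt G (G' s) s := by
    intro s hs
    have hs0 : (0:ℝ) ≤ s := le_trans ht₀ hs.1
    exact loss_hasDerivAt' A b L hL (fun s n => r s * u s n)
      (fun n => -(ηr s * gradR A b L (r s) (u s)) * u s n +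
        r s * -(ηu s * gradU A b L (r s) (u s) n)) s
      (fun n => (hdr s hs0).mul (hdu s hs0 n))
  have hm0 : 0 ≤ min cr (cu * cx ^ 2 * (I.card : ℝ)) :=
    le_min hcr.le (by positivity)
  have hbound : ∀ s ∈ Set.Icc t₀ T, G' s ≤ -K * G s := by
    intro s hs
    have hs0 : (0:ℝ) ≤ s := le_trans ht₀ hs.1
    set g : Fin N → ℝ := gradLoss A b L (fun k => r s * u s k) with hgdef
    set S₁ := ∑ n, u s n * g n with hS₁
    set S₂ := ∑ n, g n ^ 2 with hS₂
    have hgradR : gradR A b L (r s) (u s) = S₁ := by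
      unfold gradR
      rw [hue s hs0, hnv s hs0]
      simp [hS₁, hgdef]
    have hgradU : ∀ n, gradU A b L (r s) (u s) n = r s * (g n - S₁ * u s n) := by
      intro n
      unfold gradU
      rw [hue s hs0, hnv s hs0]
      simp [hS₁, hgdef]
      try ring
    -- rewrite G' s
    have hDeq : G' s = -(ηr s * S₁ ^ 2) - ηu s * r s ^ 2 * (S₂ - S₁ ^ 2) := by
      rw [hG'def]
      simp only [hgradR]
      calc (∑ n, g n * (-(ηr s * S₁) * u s n +
              r s * -(ηu s * gradU A b L (r s) (u s) n)))
          = ∑ n, ((-(ηr s * S₁)) * (u s n * g n) + (-(ηu s * r s ^ 2)) * g n ^ 2 +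
              (ηu s * r s ^ 2 * S₁) * (u s n * g n)) := by
            apply Finset.sum_congr rfl
            intro n _
            rw [hgradU n]
            ring
        _ = (-(ηr s * S₁)) * S₁ + (-(ηu s * r s ^ 2)) * S₂ +
              (ηu s * r s ^ 2 * S₁) * S₁ := by
            rw [Finset.sum_add_distrib, Finset.sum_add_distrib,
              ← Finset.mul_sum, ← Finset.mul_sum, ← Finset.mul_sum, ← hS₁, ← hS₂]
        _ = -(ηr s * S₁ ^ 2) - ηu s * r s ^ 2 * (S₂ - S₁ ^ 2) := by ring
    -- Cauchy-Schwarz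
    have hCS : S₁ ^ 2 ≤ S₂ := by
      have h := Finset.sum_mul_sq_le_sq_mul_sq Finset.univ (u s) g
      rw [husq s hs0] at h
      simpa [hS₁, hS₂] using h
    have hS₁0 : 0 ≤ S₁ ^ 2 := sq_nonneg _
    -- r² ≥ cx² |I|
    have hr2 : cx ^ 2 * (I.card : ℝ) ≤ r s ^ 2 := by
      have hstep1 : cx ^ 2 * (I.card : ℝ) = ∑ _n ∈ I, cx ^ 2 := by
        rw [Finset.sum_const, nsmul_eq_mul]
        ring
      have hstep2 : ∑ _n ∈ I, cx ^ 2 ≤ ∑ n ∈ I, (r s * u s n) ^ 2 := by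
        apply Finset.sum_le_sum
        intro n hn
        have h1 := hxI s hs n hn
        have h2 : x s n = r s * u s n := by rw [hxeq s hs0]
        rw [h2] at h1
        calc cx ^ 2 ≤ |r s * u s n| ^ 2 := by
              apply pow_le_pow_left₀ hcx.le h1
          _ = (r s * u s n) ^ 2 := sq_abs _
      have hstep3 : ∑ n ∈ I, (r s * u s n) ^ 2 = r s ^ 2 * ∑ n ∈ I, u s n ^ 2 := by
        rw [Finset.mul_sum]
        apply Finset.sum_congr rfl
        intro n _
        ring
      have hstep4 : r s ^ 2 * ∑ n ∈ I, u s n ^ 2 ≤ r s ^ 2 * 1 := by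
        apply mul_le_mul_of_nonneg_left _ (sq_nonneg (r s))
        rw [← husq s hs0]
        exact Finset.sum_le_sum_of_subset_of_nonneg (Finset.subset_univ I)
          (fun n _ _ => sq_nonneg _)
      calc cx ^ 2 * (I.card : ℝ) = ∑ _n ∈ I, cx ^ 2 := hstep1
        _ ≤ ∑ n ∈ I, (r s * u s n) ^ 2 := hstep2
        _ = r s ^ 2 * ∑ n ∈ I, u s n ^ 2 := hstep3
        _ ≤ r s ^ 2 * 1 := hstep4
        _ = r s ^ 2 := mul_one _
    -- S₂ lower bound via σ
    set e : Fin M → ℝ := A.mulVec (hadPow (fun k => r s * u s k) L) - b with hedef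
    have hsumE : ∑ m, e m ^ 2 = (2 * (L : ℝ)) * G s := by
      rw [hGdef]
      show ∑ m, e m ^ 2 = (2 * (L : ℝ)) *
        ((1 / (2 * (L : ℝ))) * ∑ m, (A.mulVec (hadPow (fun n => r s * u s n) L) m - b m) ^ 2)
      have : ∀ m, e m = A.mulVec (hadPow (fun n => r s * u s n) L) m - b m := fun m => rfl
      rw [Finset.sum_congr rfl (fun m _ => by rw [this m])]
      field_simp
    have hcx2L : (0:ℝ) ≤ cx ^ (2 * L - 2) := by positivity
    have hS2low : (2 * (L : ℝ)) * cx ^ (2 * L - 2) * σ ^ 2 * G s ≤ S₂ := by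
      have hful := hfull e
      have hgsq : ∀ n ∈ I, cx ^ (2 * L - 2) * (A.transpose.mulVec e) n ^ 2 ≤ g n ^ 2 := by
        intro n hn
        have h1 := hxI s hs n hn
        have h2 : x s n = r s * u s n := by rw [hxeq s hs0]
        rw [h2] at h1
        have hxl : cx ^ (2 * L - 2) ≤ (r s * u s n) ^ (2 * L - 2) := by
          have hsq : cx ^ 2 ≤ (r s * u s n) ^ 2 := by
            calc cx ^ 2 ≤ |r s * u s n| ^ 2 := pow_le_pow_left₀ hcx.le h1 2
              _ = (r s * u s n) ^ 2 := sq_abs _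
          have := pow_le_pow_left₀ (by positivity) hsq (L - 1)
          rw [← pow_mul, ← pow_mul] at this
          have harith : 2 * (L - 1) = 2 * L - 2 := by omega
          rwa [harith] at this
        have hgn : g n ^ 2 = (A.transpose.mulVec e) n ^ 2 * (r s * u s n) ^ (2 * L - 2) := by
          rw [hgdef]
          show (A.transpose.mulVec (A.mulVec (hadPow (fun k => r s * u s k) L) - b) n *
            (r s * u s n) ^ (L - 1)) ^ 2 = _
          rw [← hedef, mul_pow, ← pow_mul]
          congr 2
          omega
        rw [hgn]
        nlinarith [hxl, sq_nonneg (A.transpose.mulVec e n), hcx2L]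
      calc (2 * (L : ℝ)) * cx ^ (2 * L - 2) * σ ^ 2 * G s
          = cx ^ (2 * L - 2) * (σ ^ 2 * ∑ m, e m ^ 2) := by rw [hsumE]; ring
        _ ≤ cx ^ (2 * L - 2) * ∑ n ∈ I, (A.transpose.mulVec e) n ^ 2 :=
            mul_le_mul_of_nonneg_left hful hcx2L
        _ = ∑ n ∈ I, cx ^ (2 * L - 2) * (A.transpose.mulVec e) n ^ 2 := Finset.mul_sum _ _ _
        _ ≤ ∑ n ∈ I, g n ^ 2 := Finset.sum_le_sum hgsq
        _ ≤ ∑ n, g n ^ 2 := Finset.sum_le_sum_of_subset_of_nonneg (Finset.subset_univ I)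
            (fun n _ _ => sq_nonneg _)
        _ = S₂ := hS₂.symm
    -- combine
    have hηrs := hηr s hs
    have hηus := hηu s hs
    have hηus0 : 0 ≤ ηu s := le_trans hcu.le hηus
    have h1 : cr * S₁ ^ 2 ≤ ηr s * S₁ ^ 2 := mul_le_mul_of_nonneg_right hηrs hS₁0
    have hca : (0:ℝ) ≤ cx ^ 2 * (I.card : ℝ) := by positivity
    have h2' : cu * (cx ^ 2 * (I.card : ℝ)) ≤ ηu s * r s ^ 2 :=
      mul_le_mul hηus hr2 hca hηus0
    have h2 : cu * (cx ^ 2 * (I.card : ℝ)) * (S₂ - S₁ ^ 2) ≤ ηu s * r s ^ 2 * (S₂ - S₁ ^ 2) :=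
      mul_le_mul_of_nonneg_right h2' (by linarith)
    have hmin1 : min cr (cu * cx ^ 2 * (I.card : ℝ)) ≤ cr := min_le_left _ _
    have hmin2 : min cr (cu * cx ^ 2 * (I.card : ℝ)) ≤ cu * (cx ^ 2 * (I.card : ℝ)) := by
      have := min_le_right cr (cu * cx ^ 2 * (I.card : ℝ))
      linarith [this]
    have h5 : K * G s ≤ min cr (cu * cx ^ 2 * (I.card : ℝ)) * S₂ := by
      have : K * G s = min cr (cu * cx ^ 2 * (I.card : ℝ)) *
          ((2 * (L : ℝ)) * cx ^ (2 * L - 2) * σ ^ 2 * G s) := by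
        rw [hKdef]; ring
      rw [this]
      exact mul_le_mul_of_nonneg_left hS2low hm0
    rw [hDeq]
    have ha := mul_le_mul_of_nonneg_right hmin1 hS₁0
    have hb := mul_le_mul_of_nonneg_right hmin2 (show (0:ℝ) ≤ S₂ - S₁ ^ 2 by linarith)
    have hsplit : min cr (cu * cx ^ 2 * (I.card : ℝ)) * S₂ =
        min cr (cu * cx ^ 2 * (I.card : ℝ)) * S₁ ^ 2 +
        min cr (cu * cx ^ 2 * (I.card : ℝ)) * (S₂ - S₁ ^ 2) := by ring
    linarith
  intro t ht
  have hres := gronwall_decay' G G' K t₀ T hGd hbound t ht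
  have htt0 : (0:ℝ) ≤ t := le_trans ht₀ ht.1
  rw [hxeq t htt0, hxeq t₀ ht₀]
  calc loss A b L (fun n => r t * u t n) = G t := rfl
    _ ≤ G t₀ * Real.exp (-(K * (t - t₀))) := hres
    _ = loss A b L (fun n => r t₀ * u t₀ n) *
        Real.exp (-(min cr (cu * cx ^ 2 * (I.card : ℝ)) *
          (2 * (L : ℝ)) * cx ^ (2 * L - 2) * σ ^ 2 * (t - t₀))) := by
        rw [hKdef]

end
end

section
/- Let L ≥ 2 be an integer, A ∈ ℝ^{M×N}, and P_A = A†A. Suppose x̃⁽¹⁾, x̃⁽²⁾ : [0,∞) → ℝ^N are strictly positive entrywise and uniformly bounded above and away from zero (there exist 0 < c ≤ C with c ≤ x̃⁽ⁱ⁾_n(t) ≤ C for all i, n, t). If lim_{t→∞} A[x̃⁽¹⁾(t) − x̃⁽²⁾(t)] = 0, and additionally lim_{t→∞}(I − P_A)[log(x̃⁽¹⁾(t)) − log(x̃⁽²⁾(t))] = 0 in the case L = 2, or lim_{t→∞}(I − P_A)[(x̃⁽¹⁾(t))^{⊙(2/L − 1)} − (x̃⁽²⁾(t))^{⊙(2/L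 − 1)}] = 0 in the case L ≠ 2, then lim_{t→∞}[x̃⁽¹⁾(t) − x̃⁽²⁾(t)] = 0. -/
open Filter Topology

noncomputable section

variable {M N : ℕ}

open Filter Topology Set

/-- product of tendsto-zero and eventually bounded tends to zero -/
lemma aux_prod_tendsto {f g : ℝ → ℝ} {B : ℝ} (hf : Tendsto f atTop (𝓝 0))
    (hg : ∀ᶠ t in atTop, |g t| ≤ B) :
    Tendsto (fun t => f t * g t) atTop (𝓝 0) := by
  rw [tendsto_zero_iff_abs_tendsto_zero]
  have hb : Tendsto (fun t => |f t| * B) atTop (𝓝 0) := by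
    simpa using ((tendsto_zero_iff_abs_tendsto_zero f).mp hf).mul_const B
  refine squeeze_zero' (Eventually.of_forall fun t => abs_nonneg _) (hg.mono fun t ht => ?_) hb
  simp only [Function.comp_apply, abs_mul]
  exact mul_le_mul_of_nonneg_left ht (abs_nonneg _)

/-- MVT-based two-sided bound. -/
lemma aux_mvt {c C : ℝ} (hc : 0 < c) (f f' : ℝ → ℝ)
    (hf : ∀ x ∈ Set.Icc c C, HasDerivAt f (f' x) x)
    (κ K : ℝ) (hκ : 0 < κ)
    (hbd : ∀ x ∈ Set.Icc c C, κ ≤ f' x ∧ f' x ≤ K)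
    {a b : ℝ} (ha : a ∈ Set.Icc c C) (hb : b ∈ Set.Icc c C) :
    κ * (a - b) ^ 2 ≤ (a - b) * (f a - f b) ∧ |f a - f b| ≤ K * |a - b| := by
  have key : ∀ p q : ℝ, p ∈ Set.Icc c C → q ∈ Set.Icc c C → q < p →
      κ * (p - q) ^ 2 ≤ (p - q) * (f p - f q) ∧ |f p - f q| ≤ K * |p - q| := by
    intro p q hp hq hqp
    have hsub : Set.Icc q p ⊆ Set.Icc c C := Set.Icc_subset_Icc hq.1 hp.2
    obtain ⟨ξ, hξ, hslope⟩ := exists_hasDerivAt_eq_slope f f' hqp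
      (fun x hx => (hf x (hsub hx)).continuousAt.continuousWithinAt)
      (fun x hx => hf x (hsub (Set.mem_Icc_of_Ioo hx)))
    have hξm : ξ ∈ Set.Icc c C := hsub (Set.mem_Icc_of_Ioo hξ)
    have hne : p - q ≠ 0 := sub_ne_zero.mpr hqp.ne'
    have heq : f p - f q = f' ξ * (p - q) := by
      rw [hslope, div_mul_cancel₀ _ hne]
    have hpq : 0 < p - q := sub_pos.mpr hqp
    obtain ⟨h1, h2⟩ := hbd ξ hξm
    constructor
    · rw [heq]
      nlinarith
    · rw [heq, abs_mul, abs_of_pos hpq]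
      have : |f' ξ| ≤ K := abs_le.mpr ⟨by linarith, h2⟩
      exact mul_le_mul_of_nonneg_right this hpq.le
  rcases lt_trichotomy b a with h | h | h
  · exact key a b ha hb h
  · simp [h]
  · obtain ⟨k1, k2⟩ := key b a hb ha h
    constructor
    · have : (b - a) * (f b - f a) = (a - b) * (f a - f b) := by ring
      calc κ * (a - b) ^ 2 = κ * (b - a) ^ 2 := by ring
        _ ≤ (b - a) * (f b - f a) := k1
        _ = (a - b) * (f a - f b) := by ring
    · rw [abs_sub_comm (f a), abs_sub_comm a]
      exact k2

/-- Main abstract lemma. -/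
lemma aux_main {M N : ℕ} (A : Matrix (Fin M) (Fin N) ℝ) (Adag : Matrix (Fin N) (Fin M) ℝ)
    (hsym : (Adag * A).transpose = Adag * A)
    (h g : ℝ → Fin N → ℝ) (κ B D : ℝ) (hκ : 0 < κ)
    (hlow : ∀ᶠ t in atTop, ∀ n, κ * (h t n) ^ 2 ≤ h t n * g t n)
    (hB : ∀ᶠ t in atTop, ∀ n, |g t n| ≤ B)
    (hD : ∀ᶠ t in atTop, ∀ n, |h t n| ≤ D)
    (hA : Tendsto (fun t => A.mulVec (h t)) atTop (𝓝 0))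
    (hg : Tendsto (fun t => (1 - Adag * A).mulVec (g t)) atTop (𝓝 0)) :
    Tendsto h atTop (𝓝 0) := by
  set P := Adag * A with hP
  -- φ = P h tends to 0
  have hφ : Tendsto (fun t => P.mulVec (h t)) atTop (𝓝 0) := by
    have hcont : Continuous (Adag.mulVecLin) := Adag.mulVecLin.continuous_of_finiteDimensional
    have := (hcont.tendsto 0).comp hA
    simp only [Function.comp_def, Matrix.mulVecLin_apply, map_zero] at this
    simpa [Matrix.mulVec_mulVec] using this
  -- decompose S
  set S := fun t => ∑ n, h t n * g t n with hSdef
  have hS : Tendsto S atTop (𝓝 0) := by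
    have hdecomp : ∀ t, S t = (∑ n, P.mulVec (h t) n * g t n)
        + ∑ n, h t n * ((1 - P).mulVec (g t)) n := by
      intro t
      have hsplit : ∀ n, g t n = P.mulVec (g t) n + ((1 - P).mulVec (g t)) n := by
        intro n
        simp [Matrix.sub_mulVec, Matrix.one_mulVec]
      have hsymm : ∑ n, h t n * P.mulVec (g t) n = ∑ n, P.mulVec (h t) n * g t n := by
        simp only [Matrix.mulVec, dotProduct, Finset.mul_sum, Finset.sum_mul]
        rw [Finset.sum_comm]
        refine Finset.sum_congr rfl fun k _ => Finset.sum_congr rfl fun n _ => ?_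
        have : P n k = P k n := by
          conv_lhs => rw [← hsym]
          simp [Matrix.transpose_apply]
        rw [this]; ring
      calc S t = ∑ n, h t n * (P.mulVec (g t) n + ((1 - P).mulVec (g t)) n) := by
            refine Finset.sum_congr rfl fun n _ => ?_
            rw [← hsplit n]
          _ = (∑ n, h t n * P.mulVec (g t) n) + ∑ n, h t n * ((1 - P).mulVec (g t)) n := by
            rw [← Finset.sum_add_distrib]
            exact Finset.sum_congr rfl fun n _ => by ring
          _ = _ := by rw [hsymm]
    have h1 : Tendsto (fun t => ∑ n, P.mulVec (h t) n * g t n) atTop (𝓝 0) := by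
      have : Tendsto (fun t => ∑ n, P.mulVec (h t) n * g t n) atTop
          (𝓝 (∑ _n : Fin N, (0 : ℝ))) := by
        refine tendsto_finset_sum _ fun n _ => ?_
        exact aux_prod_tendsto (tendsto_pi_nhds.mp hφ n) (hB.mono fun t ht => ht n)
      simpa using this
    have h2 : Tendsto (fun t => ∑ n, h t n * ((1 - P).mulVec (g t)) n) atTop (𝓝 0) := by
      have : Tendsto (fun t => ∑ n, h t n * ((1 - P).mulVec (g t)) n) atTop
          (𝓝 (∑ _n : Fin N, (0 : ℝ))) := by
        refine tendsto_finset_sum _ fun n _ => ?_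
        have h0 : Tendsto (fun t => ((1 - P).mulVec (g t)) n) atTop (𝓝 0) :=
          tendsto_pi_nhds.mp hg n
        have := aux_prod_tendsto h0 (hD.mono fun t ht => ht n)
        simpa [mul_comm] using this
      simpa using this
    have := h1.add h2
    simp only [add_zero] at this
    exact this.congr fun t => (hdecomp t).symm
  -- sum of squares tends to 0
  set Q := fun t => ∑ n, (h t n) ^ 2 with hQdef
  have hQ : Tendsto Q atTop (𝓝 0) := by
    have hb : Tendsto (fun t => κ⁻¹ * S t) atTop (𝓝 0) := by
      simpa using hS.const_mul κ⁻¹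
    refine squeeze_zero' (Eventually.of_forall fun t =>
      Finset.sum_nonneg fun n _ => sq_nonneg _) (hlow.mono fun t ht => ?_) hb
    have hκQ : κ * Q t ≤ S t := by
      rw [Finset.mul_sum]
      exact Finset.sum_le_sum fun n _ => ht n
    calc Q t = κ⁻¹ * (κ * Q t) := by field_simp
      _ ≤ κ⁻¹ * S t := mul_le_mul_of_nonneg_left hκQ (inv_nonneg.mpr hκ.le)
  -- coordinates
  rw [tendsto_pi_nhds]
  intro n
  have hsq : Tendsto (fun t => (h t n) ^ 2) atTop (𝓝 0) := by
    refine squeeze_zero (fun t => sq_nonneg _) (fun t => ?_) hQ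
    exact Finset.single_le_sum (fun k _ => sq_nonneg (h t k)) (Finset.mem_univ n)
  have := (Real.continuous_sqrt.tendsto 0).comp hsq
  simp only [Function.comp_def, Real.sqrt_sq_eq_abs, Real.sqrt_zero] at this
  simpa using (tendsto_zero_iff_abs_tendsto_zero _).mpr this

/-- Bridge lemma: apply aux_main via MVT bounds. -/
lemma aux_apply {M N : ℕ} (A : Matrix (Fin M) (Fin N) ℝ) (Adag : Matrix (Fin N) (Fin M) ℝ)
    (hsym : (Adag * A).transpose = Adag * A)
    (x1 x2 : ℝ → Fin N → ℝ) (c C : ℝ) (hc : 0 < c) (hcC : c ≤ C)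
    (hbd1 : ∀ t, 0 ≤ t → ∀ n, c ≤ x1 t n ∧ x1 t n ≤ C)
    (hbd2 : ∀ t, 0 ≤ t → ∀ n, c ≤ x2 t n ∧ x2 t n ≤ C)
    (f f' : ℝ → ℝ) (hf : ∀ x ∈ Set.Icc c C, HasDerivAt f (f' x) x)
    (κ K : ℝ) (hκ : 0 < κ)
    (hfbd : ∀ x ∈ Set.Icc c C, κ ≤ f' x ∧ f' x ≤ K)
    (hA : Tendsto (fun t => A.mulVec (x1 t - x2 t)) atTop (𝓝 0))
    (hgt : Tendsto (fun t => (1 - Adag * A).mulVec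
      (fun n => f (x1 t n) - f (x2 t n))) atTop (𝓝 0)) :
    Tendsto (fun t => x1 t - x2 t) atTop (𝓝 0) := by
  have hK : 0 ≤ K := le_trans hκ.le ((hfbd c ⟨le_refl c, hcC⟩).1.trans (hfbd c ⟨le_refl c, hcC⟩).2)
  have hev : ∀ᶠ t in (atTop : Filter ℝ), (0:ℝ) ≤ t := eventually_ge_atTop 0
  refine aux_main A Adag hsym (fun t => x1 t - x2 t)
    (fun t n => f (x1 t n) - f (x2 t n)) κ (K * (C - c)) (C - c) hκ ?_ ?_ ?_ hA hgt
  · refine hev.mono fun t ht n => ?_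
    have := (aux_mvt hc f f' hf κ K hκ hfbd ⟨(hbd1 t ht n).1, (hbd1 t ht n).2⟩
      ⟨(hbd2 t ht n).1, (hbd2 t ht n).2⟩).1
    simpa [Pi.sub_apply] using this
  · refine hev.mono fun t ht n => ?_
    have h1 := hbd1 t ht n; have h2 := hbd2 t ht n
    have habs : |x1 t n - x2 t n| ≤ C - c := abs_le.mpr ⟨by linarith, by linarith⟩
    have := (aux_mvt hc f f' hf κ K hκ hfbd ⟨h1.1, h1.2⟩ ⟨h2.1, h2.2⟩).2
    calc |f (x1 t n) - f (x2 t n)| ≤ K * |x1 t n - x2 t n| := this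
      _ ≤ K * (C - c) := mul_le_mul_of_nonneg_left habs hK
  · refine hev.mono fun t ht n => ?_
    have h1 := hbd1 t ht n; have h2 := hbd2 t ht n
    simp only [Pi.sub_apply]
    exact abs_le.mpr ⟨by linarith, by linarith⟩


theorem stmt14 {M N : ℕ} (L : ℕ) (hL : 2 ≤ L)
    (A : Matrix (Fin M) (Fin N) ℝ)
    (Adag : Matrix (Fin N) (Fin M) ℝ) (hdag : IsMoorePenrose A Adag)
    (x1 x2 : ℝ → Fin N → ℝ)
    (c C : ℝ) (hc : 0 < c) (hcC : c ≤ C)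
    (hbd1 : ∀ t, 0 ≤ t → ∀ n, c ≤ x1 t n ∧ x1 t n ≤ C)
    (hbd2 : ∀ t, 0 ≤ t → ∀ n, c ≤ x2 t n ∧ x2 t n ≤ C)
    (hA : Tendsto (fun t => A.mulVec (x1 t - x2 t)) atTop (𝓝 0))
    (hlog : L = 2 → Tendsto (fun t => (1 - Adag * A).mulVec
      (fun n => Real.log (x1 t n) - Real.log (x2 t n))) atTop (𝓝 0))
    (hpow : L ≠ 2 → Tendsto (fun t => (1 - Adag * A).mulVec
      (fun n => x1 t n ^ ((2 : ℝ) / (L : ℝ) - 1) - x2 t n ^ ((2 : ℝ) / (L : ℝ) - 1)))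
      atTop (𝓝 0)) :
    Tendsto (fun t => x1 t - x2 t) atTop (𝓝 0) := by
  have hsym := hdag.2.2.2
  have hC : 0 < C := lt_of_lt_of_le hc hcC
  by_cases hL2 : L = 2
  · -- logarithm case
    refine aux_apply A Adag hsym x1 x2 c C hc hcC hbd1 hbd2 Real.log (fun x => x⁻¹)
      (fun x hx => Real.hasDerivAt_log (ne_of_gt (lt_of_lt_of_le hc hx.1)))
      C⁻¹ c⁻¹ (inv_pos.mpr hC) (fun x hx => ?_) hA (hlog hL2)
    have hx0 : 0 < x := lt_of_lt_of_le hc hx.1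
    constructor
    · exact inv_anti₀ hx0 hx.2
    · exact inv_anti₀ hc hx.1
  · -- rpow case
    set α : ℝ := (2 : ℝ) / (L : ℝ) - 1 with hα
    have hL3 : 3 ≤ L := by omega
    have hLpos : (0 : ℝ) < (L : ℝ) := by exact_mod_cast Nat.pos_of_ne_zero (by omega)
    have hL3' : (3 : ℝ) ≤ (L : ℝ) := by exact_mod_cast hL3
    have hαneg : α < 0 := by
      rw [hα, sub_neg]
      rw [div_lt_one hLpos]
      linarith
    have hαgt : -1 < α := by
      rw [hα]
      have : 0 < (2 : ℝ) / (L : ℝ) := by positivity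
      linarith
    have hnegα : 0 < -α := by linarith
    refine aux_apply A Adag hsym x1 x2 c C hc hcC hbd1 hbd2
      (fun x => -(x ^ α)) (fun x => (-α) * x ^ (α - 1)) (fun x hx => ?_)
      ((-α) * C ^ (α - 1)) ((-α) * c ^ (α - 1))
      (mul_pos hnegα (Real.rpow_pos_of_pos hC _)) (fun x hx => ?_) hA ?_
    · have hx0 : x ≠ 0 := ne_of_gt (lt_of_lt_of_le hc hx.1)
      have := (Real.hasDerivAt_rpow_const (p := α) (Or.inl hx0)).neg
      exact this.congr_deriv (by ring)
    · have hx0 : 0 < x := lt_of_lt_of_le hc hx.1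
      have hz : α - 1 ≤ 0 := by linarith
      constructor
      · exact mul_le_mul_of_nonneg_left (Real.rpow_le_rpow_of_nonpos hx0 hx.2 hz) hnegα.le
      · exact mul_le_mul_of_nonneg_left (Real.rpow_le_rpow_of_nonpos hc hx.1 hz) hnegα.le
    · have := (hpow hL2).neg
      rw [neg_zero] at this
      refine this.congr fun t => ?_
      have hv : (fun n => (fun x => -(x ^ α)) (x1 t n) - (fun x => -(x ^ α)) (x2 t n))
          = -(fun n => x1 t n ^ α - x2 t n ^ α) := by
        funext n; simp only [Pi.neg_apply]; ring
      rw [hv, Matrix.mulVec_neg]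


end
end

section
/- Let L ∈ {1, 2} and η̃ > 0. Suppose (r,u) follows the weight-normalized gradient flow with learning rates (η_r, η_u) = (η̃, 1), r(0) > 0, and u(0) > 0 entrywise with ‖u(0)‖₂ = 1. If all entries of u(t) are bounded away from zero uniformly in t, then r(t) is uniformly bounded above: there exists B such that r(t) ≤ B for all t ≥ 0. -/
open Filter Topology

noncomputable section

variable {M N : ℕ}

open Set Matrix RealInnerProductSpace


lemma aux_mono {f f' : ℝ → ℝ} {a t : ℝ} (hat : a ≤ t)
    (hd : ∀ s ∈ Icc a t, HasDerivAt f (f' s) s)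
    (h0 : ∀ s ∈ Icc a t, 0 ≤ f' s) : f a ≤ f t := by
  have hcont : ContinuousOn f (Icc a t) := fun s hs => ((hd s hs).continuousAt).continuousWithinAt
  have hmono := monotoneOn_of_deriv_nonneg (convex_Icc a t) hcont
    (fun s hs => ((hd s (interior_subset hs)).differentiableAt).differentiableWithinAt)
    (fun s hs => by rw [(hd s (interior_subset hs)).deriv]; exact h0 s (interior_subset hs))
  exact hmono (left_mem_Icc.2 hat) (right_mem_Icc.2 hat) hat

lemma aux_const {f : ℝ → ℝ} {t : ℝ} (ht : 0 ≤ t)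
    (hd : ∀ s, 0 ≤ s → HasDerivAt f 0 s) : f t = f 0 := by
  have hcont : ContinuousOn f (Icc 0 t) := fun s hs => ((hd s hs.1).continuousAt).continuousWithinAt
  exact constant_of_has_deriv_right_zero hcont
    (fun s hs => ((hd s hs.1).hasDerivWithinAt)) t (right_mem_Icc.2 ht)

lemma aux_FTC {η : ℝ} (hη : 0 < η) (x : ℝ) :
    HasDerivAt (fun y => ∫ s in (0:ℝ)..y, Real.exp (s^2/(2*η))) (Real.exp (x^2/(2*η))) x := by
  have hcont : Continuous fun s : ℝ => Real.exp (s^2/(2*η)) := by continuity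
  exact intervalIntegral.integral_hasDerivAt_right (hcont.intervalIntegrable _ _)
    (hcont.stronglyMeasurable.stronglyMeasurableAtFilter) hcont.continuousAt

lemma aux_F_nonneg {η : ℝ} (hη : 0 < η) {x : ℝ} (hx : 0 ≤ x) :
    0 ≤ ∫ s in (0:ℝ)..x, Real.exp (s^2/(2*η)) :=
  intervalIntegral.integral_nonneg hx (fun s _ => (Real.exp_pos _).le)

lemma aux_F_le {η : ℝ} (hη : 0 < η) {x : ℝ} (hx : 0 < x) :
    (∫ s in (0:ℝ)..x, Real.exp (s^2/(2*η))) ≤ (2*η/x) * Real.exp (x^2/(2*η)) := by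
  have hcont : Continuous fun s : ℝ => Real.exp (s^2/(2*η)) := by continuity
  have hcont2 : Continuous fun s : ℝ => Real.exp (x*s/(2*η)) := by continuity
  have h1 : (∫ s in (0:ℝ)..x, Real.exp (s^2/(2*η))) ≤ ∫ s in (0:ℝ)..x, Real.exp (x*s/(2*η)) := by
    apply intervalIntegral.integral_mono_on hx.le (hcont.intervalIntegrable _ _)
      (hcont2.intervalIntegrable _ _)
    intro s hs
    apply Real.exp_le_exp.2
    apply div_le_div_of_nonneg_right ?_ (by positivity)
    · nlinarith [hs.1, hs.2]
  have h2 : (∫ s in (0:ℝ)..x, Real.exp (x*s/(2*η)))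
      = (2*η/x) * Real.exp (x^2/(2*η)) - (2*η/x) * Real.exp (x*0/(2*η)) := by
    have : ∀ s ∈ Icc (0:ℝ) x, HasDerivAt (fun s => (2*η/x) * Real.exp (x*s/(2*η)))
        (Real.exp (x*s/(2*η))) s := by
      intro s _
      have h := (((hasDerivAt_id s).const_mul x).div_const (2*η)).exp.const_mul (2*η/x)
      convert h using 1
      · exact rfl
      · exact rfl
      · exact rfl
      simp only [id]
      field_simp
    rw [intervalIntegral.integral_eq_sub_of_hasDerivAt (fun s hs => this s (by
        rwa [uIcc_of_le hx.le] at hs)) (hcont2.intervalIntegrable _ _)]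
    ring_nf
  rw [h2] at h1
  have : 0 < 2*η/x := by positivity
  nlinarith [Real.exp_pos (x*0/(2*η))]


lemma aux_normal {M N : ℕ} (A : Matrix (Fin M) (Fin N) ℝ) (b : Fin M → ℝ) :
    ∃ w : Fin N → ℝ, A.transpose.mulVec (b - A.mulVec w) = 0 := by
  let T : (Fin N → ℝ) →ₗ[ℝ] EuclideanSpace ℝ (Fin M) :=
    { toFun := fun v => (WithLp.equiv 2 (Fin M → ℝ)).symm (A.mulVec v)
      map_add' := by intro v w; simp [Matrix.mulVec_add]
      map_smul' := by intro c v; simp [Matrix.mulVec_smul] }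
  let K : Submodule ℝ (EuclideanSpace ℝ (Fin M)) := LinearMap.range T
  have hK : CompleteSpace K := by infer_instance
  let b' : EuclideanSpace ℝ (Fin M) := (WithLp.equiv 2 (Fin M → ℝ)).symm b
  obtain ⟨w, hw⟩ : ∃ w : Fin N → ℝ, T w = (K.orthogonalProjectionOnto b' : EuclideanSpace ℝ (Fin M)) :=
    (K.orthogonalProjectionOnto b').2
  refine ⟨w, ?_⟩
  funext n
  have hmem : T (Pi.single n 1) ∈ K := ⟨Pi.single n 1, rfl⟩
  have h0 : ⟪b' - (K.orthogonalProjectionOnto b' : EuclideanSpace ℝ (Fin M)), T (Pi.single n 1)⟫ = 0 :=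
    K.starProjection_inner_eq_zero b' _ hmem
  rw [← hw] at h0
  have heq : ⟪b' - T w, T (Pi.single n 1)⟫ = ∑ m, (b m - A.mulVec w m) * A.mulVec (Pi.single n 1) m := by
    rw [PiLp.inner_apply]
    apply Finset.sum_congr rfl
    intro m _
    rw [Real.inner_apply]
    show ((b - A.mulVec w) m) * (A.mulVec (Pi.single n 1) m) = _
    simp only [Pi.sub_apply]
    try ring
  rw [heq] at h0
  have hAe : ∀ m, A.mulVec (Pi.single n 1) m = A m n := by
    intro m; simp [Matrix.mulVec_single]
  simp only [hAe] at h0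
  show (∑ m, A.transpose n m * (b - A.mulVec w) m) = 0
  rw [← h0]
  apply Finset.sum_congr rfl
  intro m _
  simp only [Matrix.transpose_apply, Pi.sub_apply]
  ring

lemma sum_u_gradU {M N : ℕ} (A : Matrix (Fin M) (Fin N) ℝ) (b : Fin M → ℝ) (L : ℕ) (r : ℝ)
    (u : Fin N → ℝ) : ∑ n, u n * gradU A b L r u n = 0 := by
  by_cases hs : (∑ n, u n ^ 2) = 0
  · have hz : ∀ n, u n = 0 := by
      intro n
      have := Finset.sum_eq_zero_iff_of_nonneg (fun i _ => sq_nonneg (u i)) |>.1 hs n (Finset.mem_univ n)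
      nlinarith [this]
    apply Finset.sum_eq_zero; intro n _; rw [hz n]; ring
  · have hnn : (0:ℝ) ≤ ∑ n, u n ^ 2 := Finset.sum_nonneg fun i _ => sq_nonneg _
    have hν2 : eucNorm u ^ 2 = ∑ n, u n ^ 2 := Real.sq_sqrt hnn
    unfold gradU
    have : ∀ n, u n * ((r / eucNorm u) * (gradLoss A b L (normVec r u) n -
        (∑ k, u k * gradLoss A b L (normVec r u) k) / eucNorm u ^ 2 * u n))
        = (r / eucNorm u) * (u n * gradLoss A b L (normVec r u) n -
          (∑ k, u k * gradLoss A b L (normVec r u) k) / (∑ n, u n ^ 2) * u n ^ 2) := by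
      intro n; rw [hν2]; ring
    simp only [this]
    rw [← Finset.mul_sum, Finset.sum_sub_distrib, ← Finset.mul_sum]
    rw [div_mul_cancel₀ _ hs]
    ring

lemma normVec_one {N : ℕ} {r : ℝ} {u : Fin N → ℝ} (hν : eucNorm u = 1) :
    normVec r u = fun n => r * u n := by
  funext n
  simp [normVec, hν]

set_option maxHeartbeats 2000000 in
theorem stmt15 {M N : ℕ} (L : ℕ) (hL : L = 1 ∨ L = 2) (η : ℝ) (hη : 0 < η)
    (A : Matrix (Fin M) (Fin N) ℝ) (b : Fin M → ℝ)
    (r : ℝ → ℝ) (u : ℝ → Fin N → ℝ)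
    (hflow : WNFlow A b L (fun _ => η) (fun _ => 1) r u)
    (hr0 : 0 < r 0) (hu0 : ∀ n, 0 < u 0 n) (hnorm : eucNorm (u 0) = 1)
    (c : ℝ) (hc : 0 < c) (hlb : ∀ t, 0 ≤ t → ∀ n, c ≤ u t n) :
    ∃ B : ℝ, ∀ t, 0 ≤ t → r t ≤ B := by
  obtain ⟨hr', hu'⟩ := hflow
  obtain ⟨w, hw⟩ := aux_normal A b
  have hL1 : 1 ≤ L := by rcases hL with h | h <;> omega
  -- norm invariance
  have hQ1 : ∀ t, 0 ≤ t → (∑ n, u t n ^ 2) = 1 := by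
    intro t ht
    have hconst : (∑ n, u t n ^ 2) = ∑ n, u 0 n ^ 2 := by
      apply aux_const ht
      intro s hs
      have h := HasDerivAt.fun_sum (u := Finset.univ)
        (fun n _ => ((hu' s hs n).pow 2))
      have hval : (∑ n, (2:ℕ) * u s n ^ (2-1) * -((1:ℝ) * gradU A b L (r s) (u s) n)) = 0 := by
        have h2 : (∑ n, (2:ℕ) * u s n ^ (2-1) * -((1:ℝ) * gradU A b L (r s) (u s) n))
            = -2 * ∑ n, u s n * gradU A b L (r s) (u s) n := by
          rw [Finset.mul_sum]; apply Finset.sum_congr rfl; intro n _; push_cast; ring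
        rw [h2, sum_u_gradU]; ring
      rw [hval] at h
      exact h
    rw [hconst]
    have : Real.sqrt (∑ n, u 0 n ^ 2) = 1 := hnorm
    have hnn : (0:ℝ) ≤ ∑ n, u 0 n ^ 2 := Finset.sum_nonneg fun i _ => sq_nonneg _
    nlinarith [Real.sq_sqrt hnn]
  have hν : ∀ t, 0 ≤ t → eucNorm (u t) = 1 := by
    intro t ht; unfold eucNorm; rw [hQ1 t ht, Real.sqrt_one]
  have hupos : ∀ t, 0 ≤ t → ∀ n, 0 < u t n := fun t ht n => lt_of_lt_of_le hc (hlb t ht n)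
  have hule : ∀ t, 0 ≤ t → ∀ n, u t n ≤ 1 := by
    intro t ht n
    have h1 : u t n ^ 2 ≤ 1 := by
      rw [← hQ1 t ht]
      exact Finset.single_le_sum (fun i _ => sq_nonneg (u t i)) (Finset.mem_univ n)
    nlinarith [hupos t ht n]
  -- notation
  set p : Fin M → ℝ := A.mulVec w with hp
  set X : ℝ → Fin N → ℝ := fun t n => r t * u t n with hX
  set Y : ℝ → Fin M → ℝ := fun t => A.mulVec (hadPow (X t) L) with hY
  set gA : ℝ → Fin N → ℝ := fun t => A.transpose.mulVec (fun m => Y t m - b m) with hgA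
  set gL : ℝ → Fin N → ℝ := fun t n => gA t n * (X t n) ^ (L-1) with hgLdef
  set Sf : ℝ → ℝ := fun t => ∑ m, (Y t m - p m)^2 with hSf
  set Pf : ℝ → ℝ := fun t => ∑ m, (Y t m - p m) * p m with hPf
  have hSnn : ∀ t, 0 ≤ Sf t := fun t => Finset.sum_nonneg fun m _ => sq_nonneg _
  -- identification of gradLoss
  have hgL : ∀ t, 0 ≤ t → gradLoss A b L (normVec (r t) (u t)) = gL t := by
    intro t ht
    rw [normVec_one (hν t ht)]
    rfl
  have hdot : ∀ z : Fin N → ℝ, (∑ m, (b m - p m) * A.mulVec z m) = 0 := by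
    intro z
    have h1 : (∑ m, (b m - p m) * A.mulVec z m) = (b - A.mulVec w) ⬝ᵥ A.mulVec z := rfl
    rw [h1, Matrix.dotProduct_mulVec, ← Matrix.mulVec_transpose, hw, zero_dotProduct]
  have hq : ∀ t, 0 ≤ t → gradR A b L (r t) (u t) = ∑ n, u t n * gL t n := by
    intro t ht
    unfold gradR
    rw [hgL t ht, hν t ht]
    simp only [div_one]
  have hkey : ∀ t, 0 ≤ t → r t * gradR A b L (r t) (u t) = Sf t + Pf t := by
    intro t ht
    rw [hq t ht, Finset.mul_sum]
    have h1 : ∀ n, r t * (u t n * gL t n) = gA t n * hadPow (X t) L n := by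
      intro n
      have hpow : X t n * X t n ^ (L-1) = X t n ^ L := by
        rw [← pow_succ']
        congr 1
        omega
      calc r t * (u t n * gL t n) = gA t n * (X t n * X t n ^ (L-1)) := by
            simp only [hgLdef, hX]; ring
        _ = gA t n * hadPow (X t) L n := by rw [hpow]; rfl
    simp only [h1]
    have h2 : (∑ n, gA t n * hadPow (X t) L n)
        = (fun m => Y t m - b m) ⬝ᵥ A.mulVec (hadPow (X t) L) := by
      rw [Matrix.dotProduct_mulVec, ← Matrix.mulVec_transpose]
      rfl
    rw [h2]
    have h3 : (fun m => Y t m - b m) ⬝ᵥ A.mulVec (hadPow (X t) L) = ∑ m, (Y t m - b m) * Y t m := rfl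
    rw [h3]
    have h4 : ∀ m, (Y t m - b m) * Y t m
        = ((Y t m - p m)^2 + (Y t m - p m) * p m) - (b m - p m) * A.mulVec (hadPow (X t) L) m := by
      intro m
      have : A.mulVec (hadPow (X t) L) m = Y t m := rfl
      rw [this]; ring
    simp only [h4]
    rw [Finset.sum_sub_distrib, hdot (hadPow (X t) L), Finset.sum_add_distrib]
    simp [hSf, hPf]
  have hPdot : ∀ t, 0 ≤ t → (∑ n, w n * gA t n) = Pf t := by
    intro t ht
    have h1 : (∑ n, w n * gA t n) = (fun m => Y t m - b m) ⬝ᵥ A.mulVec w := by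
      rw [Matrix.dotProduct_mulVec, ← Matrix.mulVec_transpose]
      simp only [hgA]
      rw [dotProduct_comm]
      rfl
    rw [h1]
    have h3 : (fun m => Y t m - b m) ⬝ᵥ A.mulVec w = ∑ m, (Y t m - b m) * p m := rfl
    rw [h3]
    have h4 : ∀ m, (Y t m - b m) * p m
        = (Y t m - p m) * p m - (b m - p m) * A.mulVec w m := by
      intro m
      have : A.mulVec w m = p m := rfl
      rw [this]; ring
    simp only [h4]
    rw [Finset.sum_sub_distrib, hdot w]
    simp [hPf]
  have hgradU : ∀ t, 0 ≤ t → ∀ n, gradU A b L (r t) (u t) n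
      = r t * (gL t n - (∑ k, u t k * gL t k) * u t n) := by
    intro t ht n
    unfold gradU
    rw [hgL t ht, hν t ht]
    simp only [div_one, one_pow]
  rcases hL with hL | hL
  · -- L = 1
    subst hL
    have hgl1 : ∀ t, gL t = gA t := by
      intro t; funext n; simp [hgLdef]
    set Kw : ℝ := ∑ n, |w n| with hKw
    have hKwnn : 0 ≤ Kw := Finset.sum_nonneg fun n _ => abs_nonneg _
    set Φ : ℝ → ℝ := fun s => ∑ n, w n * u s n with hΦ
    have hΦb : ∀ t, 0 ≤ t → |Φ t| ≤ Kw := by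
      intro t ht
      calc |Φ t| ≤ ∑ n, |w n * u t n| := Finset.abs_sum_le_sum_abs _ _
        _ ≤ Kw := by
          apply Finset.sum_le_sum
          intro n _
          rw [abs_mul]
          have h1 : |u t n| ≤ 1 := by
            rw [abs_of_pos (hupos t ht n)]; exact hule t ht n
          nlinarith [abs_nonneg (w n), abs_nonneg (u t n)]
    have hΦd : ∀ t, 0 ≤ t → HasDerivAt Φ (-(r t) * Pf t + (Sf t + Pf t) * Φ t) t := by
      intro t ht
      have h := HasDerivAt.fun_sum (u := Finset.univ)
        (fun n _ => ((hu' t ht n).const_mul (w n)))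
      convert h using 1
      · exact rfl
      · exact rfl
      have hk := hkey t ht
      have hvn : ∀ n, w n * (-(1 * gradU A b 1 (r t) (u t) n))
          = (-(r t)) * (w n * gA t n)
            + (r t * gradR A b 1 (r t) (u t)) * (w n * u t n) := by
        intro n
        rw [hgradU t ht n, hgl1 t, ← hgl1 t, ← hq t ht, hgl1 t]
        ring
      calc -(r t) * Pf t + (Sf t + Pf t) * Φ t
          = ∑ n, ((-(r t)) * (w n * gA t n)
              + (r t * gradR A b 1 (r t) (u t)) * (w n * u t n)) := by
            have hrfl : (∑ n, w n * u t n) = Φ t := rfl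
            rw [Finset.sum_add_distrib, ← Finset.mul_sum, ← Finset.mul_sum, hPdot t ht, hk, hrfl]
        _ = _ := by apply Finset.sum_congr rfl; intro n _; rw [hvn n]
    -- the Lyapunov-type function H
    set H : ℝ → ℝ := fun s => r s * Real.exp ((r s)^2/(2*η))
      - (∫ x in (0:ℝ)..(r s), Real.exp (x^2/(2*η)))
      - Φ s * Real.exp ((r s)^2/(2*η)) with hH
    have hHd : ∀ t, 0 ≤ t →
        HasDerivAt H (-(r t * Sf t * Real.exp ((r t)^2/(2*η)))) t := by
      intro t ht
      have hk := hkey t ht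
      set g := gradR A b 1 (r t) (u t) with hg
      have hr'' : HasDerivAt r (-(η * g)) t := hr' t ht
      have hd1 : HasDerivAt (fun s => (r s)^2/(2*η))
          (((2:ℕ) * r t ^ (2-1) * -(η * g))/(2*η)) t := (hr''.pow 2).div_const (2*η)
      have hE : HasDerivAt (fun s => Real.exp ((r s)^2/(2*η)))
          (Real.exp ((r t)^2/(2*η)) * (((2:ℕ) * r t ^ (2-1) * -(η * g))/(2*η))) t := hd1.exp
      have hrE := hr''.mul hE
      have hF : HasDerivAt (fun s => ∫ x in (0:ℝ)..(r s), Real.exp (x^2/(2*η)))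
          (Real.exp ((r t)^2/(2*η)) * -(η * g)) t := (aux_FTC hη (r t)).comp t hr''
      have hΦE := (hΦd t ht).mul hE
      have total := (hrE.sub hF).sub hΦE
      convert total using 1
      · exact rfl
      · exact rfl
      · exact rfl
      have hηne : η ≠ 0 := hη.ne'
      have e1 : Real.exp ((r t)^2/(2*η)) * (((2:ℕ) * r t ^ (2-1) * -(η * g))/(2*η))
          = -(r t * g) * Real.exp ((r t)^2/(2*η)) := by
        push_cast
        field_simp
      rw [e1, hk]
      ring
    -- thresholds
    set θ : ℝ := r 0 + Kw + 2*η + 1 with hθ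
    have hθ1 : 1 ≤ θ := by nlinarith
    have hθpos : 0 < θ := by linarith
    set B : ℝ := Real.sqrt (θ^2 + 2*η*(θ + Kw)) with hB
    have hθB : θ ≤ B := by
      rw [hB]
      calc θ = Real.sqrt (θ^2) := by rw [Real.sqrt_sq hθpos.le]
        _ ≤ _ := Real.sqrt_le_sqrt (by nlinarith)
    refine ⟨B, ?_⟩
    intro t ht
    by_cases hcase : r t ≤ θ
    · exact hcase.trans hθB
    push_neg at hcase
    have hrc : ContinuousOn r (Icc 0 t) :=
      fun s hs => ((hr' s hs.1).continuousAt).continuousWithinAt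
    -- last crossing time a
    set T : Set ℝ := Icc 0 t ∩ r ⁻¹' {θ} with hT
    have hTne : T.Nonempty := by
      have hmem : θ ∈ Icc (r 0) (r t) := ⟨by nlinarith, hcase.le⟩
      obtain ⟨s, hs, hrs⟩ := intermediate_value_Icc ht hrc hmem
      exact ⟨s, hs, hrs⟩
    have hTcl : IsClosed T := hrc.preimage_isClosed_of_isClosed isClosed_Icc isClosed_singleton
    have hTcp : IsCompact T := isCompact_Icc.of_isClosed_subset hTcl inter_subset_left
    set a : ℝ := sSup T with ha
    have haT : a ∈ T := hTcp.sSup_mem hTne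
    obtain ⟨⟨ha0, hat⟩, hra⟩ := haT
    simp only [mem_preimage, mem_singleton_iff] at hra
    have hge : ∀ s ∈ Icc a t, θ ≤ r s := by
      intro s hs
      by_contra hlt
      push_neg at hlt
      have hsa : a < s := by
        rcases lt_or_eq_of_le hs.1 with h | h
        · exact h
        · exfalso; rw [← h, hra] at hlt; exact lt_irrefl θ hlt
      have hmem : θ ∈ Icc (r s) (r t) := ⟨hlt.le, hcase.le⟩
      have hs0 : 0 ≤ s := le_trans ha0 hs.1
      obtain ⟨s', hs', hrs'⟩ := intermediate_value_Icc hs.2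
        (hrc.mono (Icc_subset_Icc hs0 le_rfl)) hmem
      have hs'T : s' ∈ T := ⟨⟨le_trans hs0 hs'.1, hs'.2⟩, hrs'⟩
      have : s' ≤ a := le_csSup hTcp.bddAbove hs'T
      linarith [hs'.1]
    -- H is nonincreasing on [a, t]
    have hHmono : H t ≤ H a := by
      have h := aux_mono (f := fun s => -H s) (f' := fun s => r s * Sf s * Real.exp ((r s)^2/(2*η)))
        hat
        (fun s hs => (hHd s (le_trans ha0 hs.1)).neg.congr_deriv (by ring))
        (fun s hs => by
          have h1 : 0 < r s := lt_of_lt_of_le hθpos (hge s hs)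
          positivity)
      have h' : -H a ≤ -H t := h
      linarith
    -- bounds on H a and H t
    have hEpos : ∀ z : ℝ, 0 < Real.exp (z^2/(2*η)) := fun z => Real.exp_pos _
    have hHa : H a ≤ (θ + Kw) * Real.exp (θ^2/(2*η)) := by
      have hFnn := aux_F_nonneg hη (le_of_lt hθpos)
      have hΦa := hΦb a ha0
      rw [abs_le] at hΦa
      have : H a = θ * Real.exp (θ^2/(2*η))
          - (∫ x in (0:ℝ)..θ, Real.exp (x^2/(2*η)))
          - Φ a * Real.exp (θ^2/(2*η)) := by rw [hH]; simp only [hra]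
      rw [this]
      nlinarith [hEpos θ, hΦa.1]
    have hrtpos : 0 < r t := lt_of_lt_of_le hθpos hcase.le
    have hHt : (r t - 2*η/(r t) - Kw) * Real.exp ((r t)^2/(2*η)) ≤ H t := by
      have hFle := aux_F_le hη hrtpos
      have hΦt := hΦb t ht
      rw [abs_le] at hΦt
      have : H t = r t * Real.exp ((r t)^2/(2*η))
          - (∫ x in (0:ℝ)..(r t), Real.exp (x^2/(2*η)))
          - Φ t * Real.exp ((r t)^2/(2*η)) := rfl
      rw [this]
      nlinarith [hEpos (r t), hΦt.2]
    have hcoef : 1 ≤ r t - 2*η/(r t) - Kw := by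
      have h1 : 2*η/(r t) ≤ 2*η := by
        rw [div_le_iff₀ hrtpos]
        nlinarith
      have : θ - 2*η - Kw = r 0 + 1 := by rw [hθ]; ring
      nlinarith
    have hEt_le : Real.exp ((r t)^2/(2*η)) ≤ (θ + Kw) * Real.exp (θ^2/(2*η)) := by
      have h1 := mul_le_mul_of_nonneg_right hcoef (hEpos (r t)).le
      rw [one_mul] at h1
      exact h1.trans (hHt.trans (hHmono.trans hHa))
    have hsplit : Real.exp ((r t)^2/(2*η))
        = Real.exp (θ^2/(2*η)) * Real.exp (((r t)^2 - θ^2)/(2*η)) := by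
      rw [← Real.exp_add]
      congr 1
      field_simp
      ring
    have hlin : ((r t)^2 - θ^2)/(2*η) + 1 ≤ Real.exp (((r t)^2 - θ^2)/(2*η)) :=
      Real.add_one_le_exp _
    have hdiv : Real.exp (((r t)^2 - θ^2)/(2*η)) ≤ θ + Kw := by
      rw [hsplit] at hEt_le
      have := (mul_le_mul_iff_right₀ (hEpos θ)).1 (by linarith [hEt_le] :
        Real.exp (θ^2/(2*η)) * Real.exp (((r t)^2 - θ^2)/(2*η))
          ≤ Real.exp (θ^2/(2*η)) * (θ + Kw))
      linarith
    have hrt2 : (r t)^2 ≤ θ^2 + 2*η*(θ + Kw) := by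
      have h1 : ((r t)^2 - θ^2)/(2*η) ≤ θ + Kw - 1 := by linarith
      have h2 := mul_le_mul_of_nonneg_left h1 (by linarith : (0:ℝ) ≤ 2*η)
      have h3 : 2*η*(((r t)^2 - θ^2)/(2*η)) = (r t)^2 - θ^2 := by field_simp
      rw [h3] at h2
      nlinarith
    calc r t ≤ |r t| := le_abs_self _
      _ = Real.sqrt ((r t)^2) := (Real.sqrt_sq_eq_abs _).symm
      _ ≤ B := by rw [hB]; exact Real.sqrt_le_sqrt hrt2

  · -- L = 2
    subst hL
    set W : ℝ := ∑ n, w n with hW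
    set Φ : ℝ → ℝ := fun s => ∑ n, w n * Real.log (u s n) with hΦ
    have hΦd : ∀ t, 0 ≤ t → HasDerivAt Φ (-(r t)^2 * Pf t + W * (Sf t + Pf t)) t := by
      intro t ht
      have h := HasDerivAt.fun_sum (u := Finset.univ)
        (fun n _ => (((hu' t ht n).log (hupos t ht n).ne').const_mul (w n)))
      convert h using 1
      · exact rfl
      · exact rfl
      have hqv := hq t ht
      have hk := hkey t ht
      have hvn : ∀ n, w n * (-(1 * gradU A b 2 (r t) (u t) n) / u t n)
          = w n * (-(r t)^2 * gA t n) + w n * (r t * gradR A b 2 (r t) (u t)) := by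
        intro n
        rw [hgradU t ht n, ← hqv]
        have hun := (hupos t ht n).ne'
        have hgl1 : gL t n = gA t n * (r t * u t n) := by
          simp only [hgLdef, hX]
          norm_num
        rw [hgl1]
        field_simp
        ring
      calc -(r t)^2 * Pf t + W * (Sf t + Pf t)
          = ∑ n, (w n * (-(r t)^2 * gA t n) + w n * (r t * gradR A b 2 (r t) (u t))) := by
            rw [Finset.sum_add_distrib, ← Finset.sum_mul]
            have : (∑ n, w n * (-(r t)^2 * gA t n)) = -(r t)^2 * ∑ n, w n * gA t n := by
              rw [Finset.mul_sum]; apply Finset.sum_congr rfl; intro n _; ring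
            rw [this, hPdot t ht, hk, ← hW]
        _ = ∑ n, w n * (-(1 * gradU A b 2 (r t) (u t) n) / u t n) := by
            apply Finset.sum_congr rfl; intro n _; rw [hvn n]
    set V : ℝ → ℝ := fun s => Φ s + (W/(2*η)) * (r s)^2 - (r s)^4/(4*η) with hV
    have hVd : ∀ t, 0 ≤ t → HasDerivAt V ((r t)^2 * Sf t) t := by
      intro t ht
      have hder := ((hΦd t ht).add (((hr' t ht).pow 2).const_mul (W/(2*η)))).sub
        (((hr' t ht).pow 4).div_const (4*η))
      convert hder using 1
      · exact rfl
      · exact rfl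
      · exact rfl
      have hk := hkey t ht
      set g := gradR A b 2 (r t) (u t) with hg
      have hηne : η ≠ 0 := hη.ne'
      have e1 : W / (2*η) * ((2:ℕ) * r t ^ (2-1) * -(η * g)) = -W * (r t * g) := by
        push_cast
        field_simp
      have e2 : ((4:ℕ) * r t ^ (4-1) * -(η * g)) / (4*η) = -((r t)^2 * (r t * g)) := by
        push_cast
        field_simp
      show (r t)^2 * Sf t = -(r t)^2 * Pf t + W * (Sf t + Pf t)
        + W / (2*η) * ((2:ℕ) * r t ^ (2-1) * -(η * g))
        - ((4:ℕ) * r t ^ (4-1) * -(η * g)) / (4*η)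
      rw [e1, e2, hk]
      ring
    have hmono : ∀ t, 0 ≤ t → V 0 ≤ V t := fun t ht =>
      aux_mono ht (fun s hs => hVd s hs.1) (fun s hs => mul_nonneg (sq_nonneg _) (hSnn s))
    set K : ℝ := ∑ n, |w n| * |Real.log c| with hK
    have hKnn : 0 ≤ K := Finset.sum_nonneg fun n _ => mul_nonneg (abs_nonneg _) (abs_nonneg _)
    have hΦb : ∀ t, 0 ≤ t → |Φ t| ≤ K := by
      intro t ht
      calc |Φ t| ≤ ∑ n, |w n * Real.log (u t n)| := Finset.abs_sum_le_sum_abs _ _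
        _ ≤ K := by
          apply Finset.sum_le_sum
          intro n _
          rw [abs_mul]
          apply mul_le_mul_of_nonneg_left _ (abs_nonneg _)
          have h1 : Real.log (u t n) ≤ 0 := Real.log_nonpos (hupos t ht n).le (hule t ht n)
          have h2 : Real.log c ≤ Real.log (u t n) := Real.log_le_log hc (hlb t ht n)
          have h3 : Real.log c ≤ 0 := h2.trans h1
          rw [abs_of_nonpos h1, abs_of_nonpos h3]
          linarith
    set D0 : ℝ := 4*η*(K + |V 0|) with hD0
    have hD0nn : 0 ≤ D0 := by positivity
    refine ⟨Real.sqrt (2*|W| + Real.sqrt D0), ?_⟩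
    intro t ht
    have h1 := hmono t ht
    have h2 := hΦb t ht
    have hX4 : (r t)^4 ≤ D0 + 2*W*(r t)^2 := by
      rw [abs_le] at h2
      have hv0 : -|V 0| ≤ V 0 := neg_abs_le _
      have hVt : V t = Φ t + W/(2*η)*(r t)^2 - (r t)^4/(4*η) := rfl
      have h5 : (r t)^4/(4*η) ≤ K + W/(2*η)*(r t)^2 + |V 0| := by
        rw [hVt] at h1
        have h22 := h2.2
        set vv := V 0
        set ph := Φ t
        set rt4 := (r t)^4/(4*η)
        set rt2 := W/(2*η)*(r t)^2
        linarith [hv0, h1, h22]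
      have hrw : (r t)^4 = 4*η*((r t)^4/(4*η)) := by field_simp
      rw [hrw]
      calc 4*η*((r t)^4/(4*η)) ≤ 4*η*(K + W/(2*η)*(r t)^2 + |V 0|) :=
            mul_le_mul_of_nonneg_left h5 (by linarith)
        _ = D0 + 2*W*(r t)^2 := by rw [hD0]; field_simp; ring
    have hXb : (r t)^2 ≤ 2*|W| + Real.sqrt D0 := by
      by_contra hcon
      push_neg at hcon
      nlinarith [Real.sq_sqrt hD0nn, Real.sqrt_nonneg D0, le_abs_self W, abs_nonneg W,
        sq_nonneg (r t), sq_nonneg ((r t)^2 - |W| - Real.sqrt D0)]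
    calc r t ≤ |r t| := le_abs_self _
      _ = Real.sqrt ((r t)^2) := (Real.sqrt_sq_eq_abs _).symm
      _ ≤ _ := Real.sqrt_le_sqrt hXb


end
end

section
/- Let L ∈ ℕ. Suppose (r,u) follows the weight-normalized gradient flow with time-dependent learning rates (η_r, η_u) = (r(t)², 1) and ‖u(0)‖₂ = 1, and set x(t) = (r(t)/‖u(t)‖₂) u(t). Then x satisfies ∂ₜx = −‖x‖₂² · ∇𝓛(x). -/
open Filter Topology

noncomputable section

variable {M N : ℕ}

theorem stmt17 {M N : ℕ} (L : ℕ)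
    (A : Matrix (Fin M) (Fin N) ℝ) (b : Fin M → ℝ)
    (r : ℝ → ℝ) (u : ℝ → Fin N → ℝ)
    (hflow : WNFlow A b L (fun t => r t ^ 2) (fun _ => 1) r u)
    (hnorm : eucNorm (u 0) = 1)
    (x : ℝ → Fin N → ℝ) (hx : ∀ t, x t = normVec (r t) (u t)) :
    ∀ t, 0 ≤ t → ∀ n,
      HasDerivAt (fun s => x s n) (-(eucNorm (x t) ^ 2 * gradLoss A b L (x t) n)) t := by
  obtain ⟨hr, hu⟩ := hflow
  set Nrm : ℝ → ℝ := fun s => ∑ n, u s n ^ 2 with hNrmdef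
  have hnn : ∀ t, (0:ℝ) ≤ Nrm t := fun t => Finset.sum_nonneg fun _ _ => sq_nonneg _
  have hNrm0 : Nrm 0 = 1 := by
    have h := Real.sq_sqrt (hnn 0)
    have : Real.sqrt (Nrm 0) = 1 := hnorm
    nlinarith [this]
  -- inner product of u with gradU is zero
  have hipz : ∀ t, (∑ n, u t n * gradU A b L (r t) (u t) n) = 0 := by
    intro t
    by_cases he : eucNorm (u t) = 0
    · simp [gradU, he]
    · have he2 : eucNorm (u t) ^ 2 = Nrm t := Real.sq_sqrt (hnn t)
      have hstep : ∀ n ∈ Finset.univ, u t n * gradU A b L (r t) (u t) n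
          = (r t / eucNorm (u t)) * (u t n * gradLoss A b L (normVec (r t) (u t)) n
            - (∑ k, u t k * gradLoss A b L (normVec (r t) (u t)) k) / eucNorm (u t) ^ 2
              * u t n ^ 2) := by
        intro n _; simp only [gradU]; ring
      rw [Finset.sum_congr rfl hstep, ← Finset.mul_sum, Finset.sum_sub_distrib,
        ← Finset.mul_sum]
      have : (∑ k, u t k * gradLoss A b L (normVec (r t) (u t)) k) / eucNorm (u t) ^ 2
          * Nrm t = ∑ k, u t k * gradLoss A b L (normVec (r t) (u t)) k := by
        rw [← he2]
        field_simp
      rw [hNrmdef] at this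
      rw [this]
      ring
  -- derivative of the squared norm is zero
  have hNderiv : ∀ t, 0 ≤ t → HasDerivAt Nrm 0 t := by
    intro t ht
    have h : HasDerivAt Nrm
        (∑ n, (2 : ℕ) * u t n ^ (2 - 1) * (-(1 * gradU A b L (r t) (u t) n))) t :=
      HasDerivAt.fun_sum fun n _ => (hu t ht n).pow 2
    convert h using 1
    have : (∑ n, (2 : ℕ) * u t n ^ (2 - 1) * (-(1 * gradU A b L (r t) (u t) n)))
        = -2 * ∑ n, u t n * gradU A b L (r t) (u t) n := by
      rw [Finset.mul_sum]
      apply Finset.sum_congr rfl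
      intro n _; push_cast; ring
    rw [this, hipz t]; ring
  -- norm is constant
  have hNconst : ∀ t, 0 ≤ t → Nrm t = 1 := by
    intro t ht
    have hdw : ∀ s ∈ Set.Ici (0:ℝ), HasDerivWithinAt Nrm 0 (Set.Ici (0:ℝ)) s :=
      fun s hs => (hNderiv s hs).hasDerivWithinAt
    have hcst := (convex_Ici (0:ℝ)).is_const_of_fderivWithin_eq_zero
      (f := Nrm) (fun s hs => ((hNderiv s hs).differentiableAt).differentiableWithinAt)
      (fun s hs => by
        have := (hdw s hs).hasFDerivWithinAt.fderivWithin (uniqueDiffOn_Ici 0 s hs)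
        rw [this]; ext; simp) ht Set.self_mem_Ici
    rw [hcst, hNrm0]
  have heuc : ∀ t, 0 ≤ t → eucNorm (u t) = 1 := by
    intro t ht
    show Real.sqrt (Nrm t) = 1
    rw [hNconst t ht, Real.sqrt_one]
  intro t ht n
  have he1 : eucNorm (u t) = 1 := heuc t ht
  set g : Fin N → ℝ := gradLoss A b L (normVec (r t) (u t)) with hg
  set S : ℝ := ∑ k, u t k * g k with hS
  -- derivative of eucNorm (u s) at t is 0
  have hsqrt : HasDerivAt (fun s => eucNorm (u s)) (0 / (2 * Real.sqrt (Nrm t))) t := by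
    have : HasDerivAt (fun s => Real.sqrt (Nrm s)) (0 / (2 * Real.sqrt (Nrm t))) t :=
      (hNderiv t ht).sqrt (by rw [hNconst t ht]; norm_num)
    exact this
  have hsqrt0 : HasDerivAt (fun s => eucNorm (u s)) 0 t := by
    simpa using hsqrt
  have hdiv : HasDerivAt (fun s => r s / eucNorm (u s))
      (((-((r t)^2 * gradR A b L (r t) (u t))) * eucNorm (u t) - r t * 0)
        / eucNorm (u t) ^ 2) t :=
    (hr t ht).div hsqrt0 (by rw [he1]; norm_num)
  have hmul : HasDerivAt (fun s => (r s / eucNorm (u s)) * u s n)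
      ((((-((r t)^2 * gradR A b L (r t) (u t))) * eucNorm (u t) - r t * 0)
        / eucNorm (u t) ^ 2) * u t n
        + (r t / eucNorm (u t)) * (-(1 * gradU A b L (r t) (u t) n))) t :=
    hdiv.mul (hu t ht n)
  have hfun : (fun s => x s n) = fun s => (r s / eucNorm (u s)) * u s n := by
    funext s
    rw [hx s]
    simp [normVec, smul_eq_mul]
  rw [hfun]
  convert hmul using 1
  -- now prove equality of the derivative values
  have hgR : gradR A b L (r t) (u t) = S := by
    rw [gradR, hS]
    apply Finset.sum_congr rfl
    intro k _
    rw [he1, hg]; ring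
  have hgU : gradU A b L (r t) (u t) n = r t * (g n - S * u t n) := by
    rw [gradU, he1, hg, hS]; ring
  have hx2 : eucNorm (x t) ^ 2 = r t ^ 2 := by
    have hnnx : (0:ℝ) ≤ ∑ k, x t k ^ 2 := Finset.sum_nonneg fun _ _ => sq_nonneg _
    have : eucNorm (x t) ^ 2 = ∑ k, x t k ^ 2 := Real.sq_sqrt hnnx
    rw [this]
    have : ∀ k ∈ Finset.univ, x t k ^ 2 = r t ^ 2 * u t k ^ 2 := by
      intro k _
      rw [hx t]
      simp [normVec, smul_eq_mul, he1]
      ring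
    rw [Finset.sum_congr rfl this, ← Finset.mul_sum]
    have : (∑ k, u t k ^ 2) = 1 := hNconst t ht
    rw [this, mul_one]
  have hgl : gradLoss A b L (x t) n = g n := by rw [hx t, hg]
  rw [hx2, hgl, hgR, hgU, he1]
  ring

end
end

section
/- Let L ≥ 2 be an integer. Suppose (r,u) follows the weight-normalized gradient flow with time-dependent learning rates (η_r, η_u) = (r(t)², 1), ‖u(0)‖₂ = 1, and the entries of x(t) = (r(t)/‖u(t)‖₂) u(t) strictly positive; set x̃(t) = x(t)^{⊙L}. Let F : ℝ₊^N → ℝ be defined by F(x̃) = (1/2)⟨x̃ ⊙ log(x̃) − x̃, 𝟏⟩ if L = 2 and F(x̃) = (L/(2(2−L)))⟨x̃^{⊙(2/L)}, 𝟏⟩ if L > 2, with Bregman divergence D_F(p,q) = F(p) − F(q) − ⟨∇F(q), p − q⟩. Then for any z ≥ 0 entrywise with Az = b, one has ∂ₜ D_F(z, x̃(t)) = −2L ‖x(t)‖₂² · 𝓛(x(t)) for all t ≥ 0; in particular t ↦ D_F(z, x̃(t)) is nonincreasing. -/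
open Filter Topology

noncomputable section

variable {M N : ℕ}

section AuxLemmas

variable {M N : ℕ}

lemma my_breGradF_deriv (L : ℕ) (hL : 2 ≤ L) {q : ℝ → Fin N → ℝ} {q' : Fin N → ℝ} {t : ℝ}
    (hd : ∀ n, HasDerivAt (fun s => q s n) (q' n) t) (hp : ∀ n, 0 < q t n) (n : Fin N) :
    HasDerivAt (fun s => breGradF L (q s) n)
      ((1 / (L : ℝ)) * q t n ^ ((2 : ℝ) / (L : ℝ) - 2) * q' n) t := by
  have hqn := (hp n).ne'
  simp only [breGradF]
  by_cases h2 : L = 2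
  · subst h2
    have := ((hd n).log hqn).const_mul (1/2 : ℝ)
    simp only [if_pos rfl]
    refine this.congr_deriv ?_
    rw [show (2:ℝ)/((2:ℕ):ℝ) - 2 = -1 by norm_num, Real.rpow_neg_one]
    field_simp
    push_cast
    ring
  · have hL0 : (L:ℝ) ≠ 0 := by positivity
    have hL2 : (2:ℝ) - (L:ℝ) ≠ 0 := by
      have : (2:ℝ) ≠ (L:ℝ) := by exact_mod_cast fun h => h2 (by exact_mod_cast h.symm)
      intro h; exact this (by linarith)
    have := (((hd n).rpow_const (Or.inl hqn) (p := (2:ℝ)/L - 1))).const_mul (1/(2-(L:ℝ)))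
    simp only [if_neg h2]
    refine this.congr_deriv ?_
    rw [show (2:ℝ)/(L:ℝ) - 1 - 1 = (2:ℝ)/(L:ℝ) - 2 by ring]
    field_simp

lemma my_breF_deriv (L : ℕ) (hL : 2 ≤ L) {q : ℝ → Fin N → ℝ} {q' : Fin N → ℝ} {t : ℝ}
    (hd : ∀ n, HasDerivAt (fun s => q s n) (q' n) t) (hp : ∀ n, 0 < q t n) :
    HasDerivAt (fun s => breF L (q s)) (∑ n, breGradF L (q t) n * q' n) t := by
  simp only [breF, breGradF]
  by_cases h2 : L = 2
  · subst h2
    simp only [if_pos rfl]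
    have h : ∀ n : Fin N, HasDerivAt (fun s => q s n * Real.log (q s n) - q s n)
        (Real.log (q t n) * q' n) t := by
      intro n
      have hqn := (hp n).ne'
      have := ((hd n).mul ((hd n).log hqn)).sub (hd n)
      refine this.congr_deriv ?_
      field_simp
      ring
    have hsum : HasDerivAt (fun s => ∑ n, (q s n * Real.log (q s n) - q s n))
        (∑ n, Real.log (q t n) * q' n) t := HasDerivAt.fun_sum (fun n _ => h n)
    have := hsum.const_mul (1/2 : ℝ)
    refine this.congr_deriv ?_
    rw [Finset.mul_sum]
    exact Finset.sum_congr rfl fun n _ => by simp; ring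
  · have hL0 : (L:ℝ) ≠ 0 := by positivity
    have hL2 : (2:ℝ) - (L:ℝ) ≠ 0 := by
      have : (2:ℝ) ≠ (L:ℝ) := by exact_mod_cast fun h => h2 (by exact_mod_cast h.symm)
      intro h; exact this (by linarith)
    simp only [if_neg h2]
    have h : ∀ n : Fin N, HasDerivAt (fun s => q s n ^ ((2:ℝ)/(L:ℝ)))
        (q' n * ((2:ℝ)/(L:ℝ)) * q t n ^ ((2:ℝ)/(L:ℝ) - 1)) t :=
      fun n => (hd n).rpow_const (Or.inl (hp n).ne')
    have hsum : HasDerivAt (fun s => ∑ n, q s n ^ ((2:ℝ)/(L:ℝ)))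
        (∑ n, q' n * ((2:ℝ)/(L:ℝ)) * q t n ^ ((2:ℝ)/(L:ℝ) - 1)) t :=
      HasDerivAt.fun_sum (fun n _ => h n)
    have := hsum.const_mul ((L:ℝ)/(2*(2-(L:ℝ))))
    refine this.congr_deriv ?_
    rw [Finset.mul_sum]
    refine Finset.sum_congr rfl fun n _ => ?_
    field_simp

lemma my_bregman_deriv (L : ℕ) (hL : 2 ≤ L) (z : Fin N → ℝ)
    {q : ℝ → Fin N → ℝ} {q' : Fin N → ℝ} {t : ℝ}
    (hd : ∀ n, HasDerivAt (fun s => q s n) (q' n) t) (hp : ∀ n, 0 < q t n) :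
    HasDerivAt (fun s => bregman L z (q s))
      (-∑ n, (1 / (L : ℝ)) * q t n ^ ((2 : ℝ) / (L : ℝ) - 2) * q' n * (z n - q t n)) t := by
  have hF := my_breF_deriv L hL hd hp
  have hterm : ∀ n : Fin N, HasDerivAt (fun s => breGradF L (q s) n * (z n - q s n))
      ((1 / (L : ℝ)) * q t n ^ ((2 : ℝ) / (L : ℝ) - 2) * q' n * (z n - q t n)
        + breGradF L (q t) n * (0 - q' n)) t := by
    intro n
    exact (my_breGradF_deriv L hL hd hp n).mul ((hasDerivAt_const t (z n)).sub (hd n))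
  have hsum : HasDerivAt (fun s => ∑ n, breGradF L (q s) n * (z n - q s n))
      (∑ n, ((1 / (L : ℝ)) * q t n ^ ((2 : ℝ) / (L : ℝ) - 2) * q' n * (z n - q t n)
        + breGradF L (q t) n * (0 - q' n))) t := HasDerivAt.fun_sum (fun n _ => hterm n)
  have htot := ((hasDerivAt_const t (breF L z)).sub hF).sub hsum
  simp only [bregman]
  refine htot.congr_deriv ?_
  rw [Finset.sum_add_distrib]
  have h1 : ∑ n, breGradF L (q t) n * (0 - q' n) = -∑ n, breGradF L (q t) n * q' n := by
    rw [← Finset.sum_neg_distrib]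
    exact Finset.sum_congr rfl fun n _ => by ring
  rw [h1]
  ring

lemma my_pow_cancel (L : ℕ) (hL : 2 ≤ L) {x : ℝ} (hx : 0 < x) :
    ((x ^ L : ℝ)) ^ ((2:ℝ)/(L:ℝ) - 2) * (x ^ (L-1) * x ^ (L-1)) = 1 := by
  have hL0 : (L:ℝ) ≠ 0 := by positivity
  have h1 : (x:ℝ) ^ L = x ^ ((L:ℝ)) := (Real.rpow_natCast x L).symm
  have h2 : (x:ℝ) ^ (L-1) = x ^ ((L:ℝ) - 1) := by
    rw [← Real.rpow_natCast x (L-1)]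
    congr 1
    rw [Nat.cast_sub (by omega)]
    norm_num
  rw [h1, h2, ← Real.rpow_mul hx.le, ← Real.rpow_add hx, ← Real.rpow_add hx]
  rw [show (L:ℝ) * ((2:ℝ)/(L:ℝ) - 2) + (((L:ℝ) - 1) + ((L:ℝ) - 1)) = 0 by field_simp; ring]
  exact Real.rpow_zero x

end AuxLemmas

theorem stmt18 {M N : ℕ} (L : ℕ) (hL : 2 ≤ L)
    (A : Matrix (Fin M) (Fin N) ℝ) (b : Fin M → ℝ)
    (r : ℝ → ℝ) (u : ℝ → Fin N → ℝ)
    (hflow : WNFlow A b L (fun t => r t ^ 2) (fun _ => 1) r u)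
    (hnorm : eucNorm (u 0) = 1)
    (x : ℝ → Fin N → ℝ) (hx : ∀ t, x t = normVec (r t) (u t))
    (hpos : ∀ t, 0 ≤ t → ∀ n, 0 < x t n)
    (z : Fin N → ℝ) (hz : ∀ n, 0 ≤ z n) (hzb : A.mulVec z = b) :
    (∀ t, 0 ≤ t → HasDerivAt (fun s => bregman L z (hadPow (x s) L))
      (-(2 * (L : ℝ) * eucNorm (x t) ^ 2 * loss A b L (x t))) t) ∧
    (∀ t₁ t₂, 0 ≤ t₁ → t₁ ≤ t₂ →
      bregman L z (hadPow (x t₂) L) ≤ bregman L z (hadPow (x t₁) L)) := by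
  obtain ⟨hr, hu⟩ := hflow
  -- the squared norm of u
  set φ : ℝ → ℝ := fun s => ∑ n, u s n ^ 2 with hφdef
  have hφnn : ∀ s, 0 ≤ φ s := fun s => Finset.sum_nonneg fun n _ => sq_nonneg _
  have hνφ : ∀ s, eucNorm (u s) = Real.sqrt (φ s) := fun s => rfl
  -- derivative of φ is zero on [0,∞)
  have hφd : ∀ t, 0 ≤ t → HasDerivAt φ 0 t := by
    intro t ht
    have h : ∀ n : Fin N, HasDerivAt (fun s => u s n ^ 2)
        ((2:ℕ) * u t n ^ 1 * (-((1:ℝ) * gradU A b L (r t) (u t) n))) t :=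
      fun n => (hu t ht n).pow 2
    have hsum : HasDerivAt φ (∑ n, (2:ℕ) * u t n ^ 1 * (-((1:ℝ) * gradU A b L (r t) (u t) n))) t :=
      HasDerivAt.fun_sum (fun n _ => h n)
    convert hsum using 1
    by_cases h0 : φ t = 0
    · symm
      apply Finset.sum_eq_zero
      intro n _
      have hn0 : u t n = 0 := by
        have := (Finset.sum_eq_zero_iff_of_nonneg (fun n _ => sq_nonneg (u t n))).mp h0 n
          (Finset.mem_univ n)
        exact pow_eq_zero_iff (by norm_num) |>.mp this
      rw [hn0]
      ring
    · have hφpos : 0 < φ t := lt_of_le_of_ne (hφnn t) (Ne.symm h0)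
      have hν2 : eucNorm (u t) ^ 2 = φ t := by rw [hνφ t]; exact Real.sq_sqrt (hφnn t)
      have hν0 : eucNorm (u t) ≠ 0 := by
        intro h
        rw [h] at hν2
        exact h0 (by rw [← hν2]; ring)
      symm
      simp only [gradU]
      set ν := eucNorm (u t) with hνdef
      set g := gradLoss A b L (normVec (r t) (u t)) with hgdef
      set S := ∑ k, u t k * g k with hSdef
      have expand : ∀ n : Fin N, ((2:ℕ):ℝ) * u t n ^ 1 *
          (-((1:ℝ) * ((r t / ν) * (g n - S / ν ^ 2 * u t n)))) =
          (-(2 * r t / ν)) * (u t n * g n) + ((2 * r t / ν) * (S / ν ^ 2)) * (u t n ^ 2) := by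
        intro n; push_cast; ring
      rw [Finset.sum_congr rfl (fun n _ => expand n), Finset.sum_add_distrib,
        ← Finset.mul_sum, ← Finset.mul_sum, ← hSdef]
      have : (∑ n, u t n ^ 2) = φ t := rfl
      rw [this, hν2]
      field_simp
      ring
  -- φ is constantly 1 on [0,∞)
  have hφ1 : ∀ t, 0 ≤ t → φ t = 1 := by
    intro t ht
    have h0 : φ 0 = 1 := by
      have h := hnorm
      rw [hνφ 0] at h
      have := Real.sq_sqrt (hφnn 0)
      rw [h] at this
      simpa using this.symm
    have hconst := constant_of_has_deriv_right_zero (f := φ) (a := 0) (b := t)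
      (fun s hs => (hφd s hs.1).continuousAt.continuousWithinAt)
      (fun s hs => (hφd s hs.1).hasDerivWithinAt)
    rw [← h0]
    exact hconst t ⟨ht, le_refl t⟩
  have hν1 : ∀ t, 0 ≤ t → eucNorm (u t) = 1 := by
    intro t ht
    rw [hνφ t, hφ1 t ht, Real.sqrt_one]
  -- derivative of the norm of u is zero
  have hνd : ∀ t, 0 ≤ t → HasDerivAt (fun s => eucNorm (u s)) 0 t := by
    intro t ht
    have h2 : φ t ≠ 0 := by rw [hφ1 t ht]; norm_num
    have := (Real.hasDerivAt_sqrt h2).comp t (hφd t ht)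
    exact this.congr_deriv (by simp)
  -- derivative of x
  have hxd : ∀ t, 0 ≤ t → ∀ n, HasDerivAt (fun s => x s n)
      (-(r t ^ 2 * gradLoss A b L (x t) n)) t := by
    intro t ht n
    have hν := hν1 t ht
    have hq : HasDerivAt (fun s => r s / eucNorm (u s))
        ((-((r t ^ 2) * gradR A b L (r t) (u t)) * eucNorm (u t) - r t * 0) / eucNorm (u t) ^ 2) t :=
      (hr t ht).div (hνd t ht) (by rw [hν]; norm_num)
    have hprod := hq.mul (hu t ht n)
    have hfun : (fun s => x s n) = fun s => (r s / eucNorm (u s)) * u s n := by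
      funext s
      rw [hx s]
      simp [normVec]
    rw [hfun]
    refine hprod.congr_deriv ?_
    simp only [gradR, gradU, ← hx t, hν]
    simp only [div_one, one_pow, mul_one, mul_zero, sub_zero, one_mul]
    ring
  -- main derivative statement
  have main : ∀ t, 0 ≤ t → HasDerivAt (fun s => bregman L z (hadPow (x s) L))
      (-(2 * (L : ℝ) * eucNorm (x t) ^ 2 * loss A b L (x t))) t := by
    intro t ht
    have hL0 : (L:ℝ) ≠ 0 := by positivity
    set q : ℝ → Fin N → ℝ := fun s => hadPow (x s) L with hqdef
    set q' : Fin N → ℝ :=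
      fun n => (L:ℝ) * x t n ^ (L-1) * (-(r t ^ 2 * gradLoss A b L (x t) n)) with hq'def
    have hd : ∀ n, HasDerivAt (fun s => q s n) (q' n) t := by
      intro n
      have := (hxd t ht n).fun_pow L
      simpa [hqdef, hq'def, hadPow] using this
    have hp : ∀ n, 0 < q t n := fun n => pow_pos (hpos t ht n) L
    have hder := my_bregman_deriv L hL z hd hp
    convert hder using 1
    have hterm : ∀ n : Fin N,
        (1 / (L : ℝ)) * q t n ^ ((2 : ℝ) / (L : ℝ) - 2) * q' n * (z n - q t n) =
        -(r t ^ 2 * (A.transpose.mulVec (A.mulVec (hadPow (x t) L) - b) n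
          * (z n - hadPow (x t) L n))) := by
      intro n
      have hc := my_pow_cancel L hL (hpos t ht n)
      have hLL : (1/(L:ℝ)) * (L:ℝ) = 1 := by field_simp
      set c : ℝ := A.transpose.mulVec (A.mulVec (hadPow (x t) L) - b) n with hcdef
      show (1 / (L : ℝ)) * (x t n ^ L : ℝ) ^ ((2 : ℝ) / (L : ℝ) - 2) *
          ((L:ℝ) * x t n ^ (L-1) * (-(r t ^ 2 * (c * x t n ^ (L - 1))))) * (z n - x t n ^ L)
          = -(r t ^ 2 * (c * (z n - x t n ^ L)))
      linear_combination ((1/(L:ℝ)) * (L:ℝ) * (-(r t ^ 2 * (c * (z n - x t n ^ L))))) * hc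
        + (-(r t ^ 2 * (c * (z n - x t n ^ L)))) * hLL
    have matid : ∑ n, A.transpose.mulVec (A.mulVec (hadPow (x t) L) - b) n
        * (z n - hadPow (x t) L n) = -∑ m, (A.mulVec (hadPow (x t) L) m - b m)^2 := by
      set w := hadPow (x t) L with hwdef
      have h1 : ∀ n : Fin N, A.transpose.mulVec (A.mulVec w - b) n
          = ∑ m, A m n * (A.mulVec w m - b m) := by
        intro n
        simp [Matrix.mulVec, dotProduct, Matrix.transpose_apply]
      calc ∑ n, A.transpose.mulVec (A.mulVec w - b) n * (z n - w n)
          = ∑ n, ∑ m, A m n * (A.mulVec w m - b m) * (z n - w n) := by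
            refine Finset.sum_congr rfl fun n _ => ?_
            rw [h1 n, Finset.sum_mul]
        _ = ∑ m, ∑ n, A m n * (A.mulVec w m - b m) * (z n - w n) := Finset.sum_comm
        _ = ∑ m, (A.mulVec w m - b m) * (A.mulVec z m - A.mulVec w m) := by
            refine Finset.sum_congr rfl fun m _ => ?_
            have hz' : A.mulVec z m = ∑ n, A m n * z n := by
              simp [Matrix.mulVec, dotProduct]
            have hw' : A.mulVec w m = ∑ n, A m n * w n := by
              simp [Matrix.mulVec, dotProduct]
            rw [hz', hw', ← Finset.sum_sub_distrib, Finset.mul_sum]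
            exact Finset.sum_congr rfl fun n _ => by ring
        _ = -∑ m, (A.mulVec w m - b m)^2 := by
            rw [hzb, ← Finset.sum_neg_distrib]
            exact Finset.sum_congr rfl fun m _ => by ring
    have e1 : ∑ n, (1 / (L : ℝ)) * q t n ^ ((2 : ℝ) / (L : ℝ) - 2) * q' n * (z n - q t n)
        = -(r t ^ 2) * ∑ n, A.transpose.mulVec (A.mulVec (hadPow (x t) L) - b) n
          * (z n - hadPow (x t) L n) := by
      rw [Finset.mul_sum]
      exact Finset.sum_congr rfl fun n _ => (hterm n).trans (by ring)
    have e3 : eucNorm (x t) ^ 2 = r t ^ 2 := by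
      have h1 : ∀ n, x t n = r t * u t n := by
        intro n
        rw [hx t]
        simp [normVec, hν1 t ht]
      have h2 : (∑ n, x t n ^ 2) = r t ^ 2 * φ t := by
        rw [Finset.mul_sum]
        exact Finset.sum_congr rfl fun n _ => by rw [h1 n]; ring
      have : eucNorm (x t) ^ 2 = ∑ n, x t n ^ 2 := Real.sq_sqrt
        (Finset.sum_nonneg fun n _ => sq_nonneg _)
      rw [this, h2, hφ1 t ht, mul_one]
    rw [e1, matid, e3]
    unfold loss
    field_simp
  refine ⟨main, ?_⟩
  intro t₁ t₂ ht₁ ht₂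
  have hanti : AntitoneOn (fun s => bregman L z (hadPow (x s) L)) (Set.Icc t₁ t₂) := by
    apply antitoneOn_of_deriv_nonpos (convex_Icc t₁ t₂)
    · intro s hs
      exact ((main s (ht₁.trans hs.1)).continuousAt).continuousWithinAt
    · intro s hs
      rw [interior_Icc] at hs
      exact ((main s (ht₁.trans hs.1.le)).differentiableAt).differentiableWithinAt
    · intro s hs
      rw [interior_Icc] at hs
      have hs0 : 0 ≤ s := ht₁.trans hs.1.le
      rw [(main s hs0).deriv]
      have hloss : 0 ≤ loss A b L (x s) := by
        unfold loss
        have : 0 ≤ (1 / (2 * (L:ℝ))) := by positivity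
        exact mul_nonneg this (Finset.sum_nonneg fun m _ => sq_nonneg _)
      have : 0 ≤ 2 * (L:ℝ) * eucNorm (x s) ^ 2 * loss A b L (x s) := by positivity
      linarith
  exact hanti ⟨le_refl t₁, ht₂⟩ ⟨ht₂, le_refl t₂⟩ ht₂


end
end
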